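/- arXiv:0905.4759 — 5 statements merged into one kernel-verified Lean document; each statement's English description precedes it below -/
import Mathlib

section
/- Let f be a nonconstant Pick function analytic and real-valued on a real neighborhood of x₁ ∈ ℝ with f(x₁) = w₁ and f'(x₁) = v₁ > 0. Then the reduction g(z) = 1/(v₁(z - x₁)) − 1/(f(z) − w₁) extends analytically to x₁, and g is a Pick function (maps the upper half-plane into its closure). -/
open Complex Set Metric Function Filter


lemma mobius_abs_lt_one {c ζ : ℂ} (hc : 0 < c.im) (hζ : 0 < ζ.im) :
    ‖(ζ - c) / (ζ - (starRingEnd ℂ) c)‖ < 1 := by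
  have hden : ζ - (starRingEnd ℂ) c ≠ 0 := by
    intro h0
    have := congrArg Complex.im h0
    simp [Complex.sub_im, Complex.conj_im] at this
    linarith
  rw [norm_div, div_lt_one (norm_pos_iff.mpr hden), Complex.norm_def, Complex.norm_def]
  apply Real.sqrt_lt_sqrt (normSq_nonneg _)
  simp only [Complex.normSq_apply, Complex.sub_re, Complex.sub_im, Complex.conj_re,
    Complex.conj_im]
  nlinarith

lemma im_minv_pos {z₀ ζ : ℂ} (hz₀ : 0 < z₀.im) (hζ : ‖ζ‖ < 1) :
    0 < ((z₀ - (starRingEnd ℂ) z₀ * ζ) / (1 - ζ)).im := by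
  have h1 : normSq ζ < 1 := by
    rw [← Complex.sq_norm]
    nlinarith [norm_nonneg ζ]
  have hden : (1 : ℂ) - ζ ≠ 0 := by
    intro h0
    have : ζ = 1 := by linear_combination -h0
    rw [this] at hζ; simp at hζ
  have hN : 0 < normSq (1 - ζ) := normSq_pos.mpr hden
  rw [Complex.div_im, div_sub_div_same]
  apply div_pos _ hN
  have key : (z₀ - (starRingEnd ℂ) z₀ * ζ).im * (1 - ζ).re - (z₀ - (starRingEnd ℂ) z₀ * ζ).re * (1 - ζ).im
      = z₀.im * (1 - normSq ζ) := by
    simp [Complex.sub_re, Complex.sub_im, Complex.mul_re, Complex.mul_im, Complex.conj_re,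
      Complex.conj_im, Complex.normSq_apply]
    ring
  rw [key]
  exact mul_pos hz₀ (by linarith)

/-- Schwarz–Pick type inequality on the upper half-plane. -/
lemma pick_halfplane_ineq (h : ℂ → ℂ)
    (hdiff : ∀ z : ℂ, 0 < z.im → DifferentiableAt ℂ h z)
    (hpos : ∀ z : ℂ, 0 < z.im → 0 < (h z).im)
    {z₀ w : ℂ} (hz₀ : 0 < z₀.im) (hw : 0 < w.im) :
    w.im * z₀.im * normSq (h w - (starRingEnd ℂ) (h z₀)) ≤
      (h w).im * (h z₀).im * normSq (w - (starRingEnd ℂ) z₀) := by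
  set c := h z₀ with hc
  have hcim : 0 < c.im := hpos z₀ hz₀
  set minv : ℂ → ℂ := fun ζ => (z₀ - (starRingEnd ℂ) z₀ * ζ) / (1 - ζ) with hminv
  set φ : ℂ → ℂ := fun ζ => (h (minv ζ) - c) / (h (minv ζ) - (starRingEnd ℂ) c) with hφ
  -- auxiliary nonvanishing
  have hMden : ∀ ζ : ℂ, 0 < ζ.im → ζ - (starRingEnd ℂ) c ≠ 0 := by
    intro ζ hζ h0
    have := congrArg Complex.im h0
    simp [Complex.sub_im, Complex.conj_im] at this
    linarith
  have hφd : DifferentiableOn ℂ φ (ball (0:ℂ) 1) := by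
    intro ζ hζ
    rw [mem_ball_zero_iff] at hζ
    have h1 : (1:ℂ) - ζ ≠ 0 := by
      intro h0
      have : ζ = 1 := by linear_combination -h0
      rw [this] at hζ; simp at hζ
    have hmd : DifferentiableAt ℂ minv ζ := by
      apply DifferentiableAt.div (by fun_prop) (by fun_prop) h1
    have him : 0 < (minv ζ).im := im_minv_pos hz₀ hζ
    have hhd : DifferentiableAt ℂ (fun ζ => h (minv ζ)) ζ :=
      (hdiff _ him).comp ζ hmd
    exact (DifferentiableAt.div (hhd.sub_const _) (hhd.sub_const _)
      (hMden _ (hpos _ him))).differentiableWithinAt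
  have hφm : MapsTo φ (ball (0:ℂ) 1) (ball (0:ℂ) 1) := by
    intro ζ hζ
    rw [mem_ball_zero_iff] at hζ ⊢
    exact mobius_abs_lt_one hcim (hpos _ (im_minv_pos hz₀ hζ))
  have hφ0 : φ 0 = 0 := by
    have : minv 0 = z₀ := by simp [hminv]
    simp [hφ, this, ← hc]
  -- the point
  have hwden : w - (starRingEnd ℂ) z₀ ≠ 0 := by
    intro h0
    have := congrArg Complex.im h0
    simp [Complex.sub_im, Complex.conj_im] at this
    linarith
  set ζw : ℂ := (w - z₀) / (w - (starRingEnd ℂ) z₀) with hζw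
  have hζwlt : ‖ζw‖ < 1 := mobius_abs_lt_one hz₀ hw
  have hz₀c : z₀ - (starRingEnd ℂ) z₀ ≠ 0 := by
    intro h0
    have := congrArg Complex.im h0
    simp [Complex.sub_im, Complex.conj_im] at this
    linarith
  have hminvζw : minv ζw = w := by
    have h1 : (1:ℂ) - ζw ≠ 0 := by
      intro h0
      have : ζw = 1 := by linear_combination -h0
      rw [this] at hζwlt; simp at hζwlt
    rw [hminv, hζw]
    field_simp
    rw [div_eq_iff (by rw [show w - (starRingEnd ℂ) z₀ - (w - z₀) = z₀ - (starRingEnd ℂ) z₀ by ring]; exact hz₀c)]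
    ring
  have hs0 := Complex.norm_le_norm_of_mapsTo_ball hφd (hφm.mono_right ball_subset_closedBall) hφ0 hζwlt
  have hs : ‖(h w - c) / (h w - (starRingEnd ℂ) c)‖ ≤ ‖ζw‖ := by
    simpa only [hφ, hminvζw] using hs0
  -- turn into normSq inequality
  have hNden1 : 0 < normSq (h w - (starRingEnd ℂ) c) := normSq_pos.mpr (hMden _ (hpos _ hw))
  have hNden2 : 0 < normSq (w - (starRingEnd ℂ) z₀) := normSq_pos.mpr hwden
  have hsq : normSq (h w - c) / normSq (h w - (starRingEnd ℂ) c)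
      ≤ normSq (w - z₀) / normSq (w - (starRingEnd ℂ) z₀) := by
    have := pow_le_pow_left₀ (norm_nonneg _) hs 2
    rwa [← Complex.normSq_eq_norm_sq, ← Complex.normSq_eq_norm_sq, hζw, normSq_div, normSq_div] at this
  rw [div_le_div_iff₀ hNden1 hNden2] at hsq
  have id1 : normSq (h w - c) = normSq (h w - (starRingEnd ℂ) c) - 4 * (h w).im * c.im := by
    simp [Complex.normSq_apply, Complex.sub_re, Complex.sub_im, Complex.conj_re, Complex.conj_im]
    ring
  have id2 : normSq (w - z₀) = normSq (w - (starRingEnd ℂ) z₀) - 4 * w.im * z₀.im := by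
    simp [Complex.normSq_apply, Complex.sub_re, Complex.sub_im, Complex.conj_re, Complex.conj_im]
    ring
  rw [id1, id2] at hsq
  nlinarith [hsq]

lemma pick_im_pos (f : ℂ → ℂ)
    (hf : ∀ z : ℂ, 0 < z.im → DifferentiableAt ℂ f z ∧ 0 ≤ (f z).im)
    (hnonconst : ¬ ∃ c : ℂ, ∀ z : ℂ, 0 < z.im → f z = c) :
    ∀ z : ℂ, 0 < z.im → 0 < (f z).im := by
  intro z₀ hz₀
  by_contra hle
  push_neg at hle
  have him : (f z₀).im = 0 := le_antisymm hle (hf z₀ hz₀).2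
  set U : Set ℂ := {z : ℂ | 0 < z.im} with hU
  have hUo : IsOpen U := isOpen_lt continuous_const Complex.continuous_im
  have hUc : Convex ℝ U := convex_halfSpace_im_gt 0
  set F : ℂ → ℂ := fun z => Complex.exp (f z * Complex.I) with hF
  have hFd : DifferentiableOn ℂ F U := fun z hz =>
    (((hf z hz).1.mul (differentiableAt_const _)).cexp).differentiableWithinAt
  have hnorm : ∀ z : ℂ, ‖F z‖ = Real.exp (-(f z).im) := by
    intro z
    rw [hF]
    simp [Complex.norm_exp]
  have hmax : IsMaxOn (norm ∘ F) U z₀ := by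
    intro z hz
    simp only [mem_setOf_eq, comp_apply, hnorm, him, neg_zero]
    exact Real.exp_le_exp.mpr (by simpa using (hf z hz).2)
  have hconst : EqOn F (const ℂ (F z₀)) U :=
    Complex.eqOn_of_isPreconnected_of_isMaxOn_norm hUc.isPreconnected hUo hFd hz₀ hmax
  -- deduce deriv f = 0 on U
  have hderiv0 : ∀ z ∈ U, deriv f z = 0 := by
    intro z hz
    have hev : F =ᶠ[nhds z] fun _ => F z₀ := by
      filter_upwards [hUo.mem_nhds hz] with y hy using hconst hy
    have h1 : HasDerivAt F 0 z := by
      have := hasDerivAt_const z (F z₀)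
      exact this.congr_of_eventuallyEq hev
    have h2 : HasDerivAt F (Complex.exp (f z * Complex.I) * (deriv f z * Complex.I)) z :=
      (((hf z hz).1.hasDerivAt.mul_const Complex.I).cexp)
    have := h1.unique h2
    have hne : Complex.exp (f z * Complex.I) ≠ 0 := Complex.exp_ne_zero _
    simpa [Complex.I_ne_zero] using mul_eq_zero.mp this.symm
  -- f constant on U
  apply hnonconst
  refine ⟨f z₀, fun z hz => ?_⟩
  have hdOn : DifferentiableOn ℂ f U := fun y hy => (hf y hy).1.differentiableWithinAt
  have h0 : ∀ y ∈ U, fderivWithin ℂ f U y = 0 := by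
    intro y hy
    have hda : HasDerivAt f 0 y := by
      have := (hf y hy).1.hasDerivAt
      rwa [hderiv0 y hy] at this
    have := hda.hasFDerivAt.hasFDerivWithinAt.fderivWithin (hUo.uniqueDiffWithinAt hy)
    rw [this]
    ext
    simp
  exact hUc.is_const_of_fderivWithin_eq_zero hdOn h0 hz hz₀

lemma pick_reduction_im_nonneg (f : ℂ → ℂ)
    (hf : ∀ z : ℂ, 0 < z.im → DifferentiableAt ℂ f z)
    (Him : ∀ z : ℂ, 0 < z.im → 0 < (f z).im)
    (x₁ w₁ v₁ : ℝ) (hv : 0 < v₁)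
    (hx : AnalyticAt ℂ f (x₁ : ℂ))
    (hw : f (x₁ : ℂ) = (w₁ : ℂ)) (hd : deriv f (x₁ : ℂ) = (v₁ : ℂ))
    {z : ℂ} (hz : 0 < z.im) :
    0 ≤ (1 / ((v₁ : ℂ) * (z - (x₁ : ℂ))) - 1 / (f z - (w₁ : ℂ))).im := by
  have hqne : ∀ u : ℂ, 0 < u.im → f u - (w₁ : ℂ) ≠ 0 := by
    intro u hu h0
    have h1 : (f u - (w₁:ℂ)).im = (f u).im := by simp
    rw [h0] at h1
    simp at h1
    have := Him u hu
    linarith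
  set h : ℂ → ℂ := fun u => -(1 / (f u - (w₁ : ℂ))) with hh
  have himh : ∀ u : ℂ, (h u).im = (f u - (w₁:ℂ)).im / normSq (f u - (w₁:ℂ)) := by
    intro u
    rw [hh]
    simp [Complex.inv_im, neg_div]
  have hdiffh : ∀ u : ℂ, 0 < u.im → DifferentiableAt ℂ h u := by
    intro u hu
    exact (((differentiableAt_const 1).div ((hf u hu).sub_const _) (hqne u hu))).neg
  have hposh : ∀ u : ℂ, 0 < u.im → 0 < (h u).im := by
    intro u hu
    rw [himh]
    apply div_pos _ (normSq_pos.mpr (hqne u hu))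
    simpa using Him u hu
  set c : ℂ := h z with hc
  have hcim : 0 < c.im := hposh z hz
  set wy : ℝ → ℂ := fun y => (x₁ : ℂ) + y * I with hwy
  set q : ℝ → ℂ := fun y => f (wy y) - (w₁ : ℂ) with hqdef
  have hwyim : ∀ y : ℝ, (wy y).im = y := by intro y; simp [hwy]
  -- per-y inequality
  have hineq : ∀ y ∈ Ioi (0:ℝ),
      z.im * normSq (1 + (starRingEnd ℂ) c * q y)
        ≤ ((q y).im / y) * c.im * normSq (wy y - (starRingEnd ℂ) z) := by
    intro y hy
    rw [mem_Ioi] at hy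
    have hwim : 0 < (wy y).im := by rw [hwyim]; exact hy
    have hbase := pick_halfplane_ineq h hdiffh hposh hz hwim
    rw [hwyim] at hbase
    have hqy : q y ≠ 0 := hqne _ hwim
    have hNq : 0 < normSq (q y) := normSq_pos.mpr hqy
    have hq_eq : q y = f (wy y) - (w₁:ℂ) := rfl
    have hh_eq : h (wy y) = -(1 / q y) := rfl
    have e1 : (h (wy y)).im * normSq (q y) = (q y).im := by
      rw [himh, ← hq_eq]
      field_simp
    have e2m : (h (wy y) - (starRingEnd ℂ) c) * q y = -(1 + (starRingEnd ℂ) c * q y) := by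
      rw [hh_eq]
      field_simp
      ring
    have e2 : normSq (h (wy y) - (starRingEnd ℂ) c) * normSq (q y)
        = normSq (1 + (starRingEnd ℂ) c * q y) := by
      rw [← normSq_mul, e2m, normSq_neg]
    have star : y * z.im * normSq (1 + (starRingEnd ℂ) c * q y)
        ≤ (q y).im * c.im * normSq (wy y - (starRingEnd ℂ) z) := by
      calc y * z.im * normSq (1 + (starRingEnd ℂ) c * q y)
          = (y * z.im * normSq (h (wy y) - (starRingEnd ℂ) c)) * normSq (q y) := by
            rw [← e2]; ring
        _ ≤ ((h (wy y)).im * c.im * normSq (wy y - (starRingEnd ℂ) z)) * normSq (q y) :=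
            mul_le_mul_of_nonneg_right hbase hNq.le
        _ = ((h (wy y)).im * normSq (q y)) * c.im * normSq (wy y - (starRingEnd ℂ) z) := by ring
        _ = (q y).im * c.im * normSq (wy y - (starRingEnd ℂ) z) := by rw [e1]
    rw [div_mul_eq_mul_div, div_mul_eq_mul_div, le_div_iff₀ hy]
    linarith
  -- limits
  have hwy0 : Tendsto wy (nhdsWithin 0 (Ioi 0)) (nhds (x₁ : ℂ)) := by
    have : Continuous wy := by rw [hwy]; fun_prop
    have := this.tendsto 0
    simp only [hwy, Complex.ofReal_zero, zero_mul, add_zero] at this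
    exact this.mono_left nhdsWithin_le_nhds
  have hq0 : Tendsto q (nhdsWithin 0 (Ioi 0)) (nhds 0) := by
    have := (hx.continuousAt.tendsto.comp hwy0).sub_const (w₁ : ℂ)
    rwa [hw, sub_self] at this
  have L1 : Tendsto (fun y => z.im * normSq (1 + (starRingEnd ℂ) c * q y))
      (nhdsWithin 0 (Ioi 0)) (nhds z.im) := by
    have hcont : Continuous (fun t : ℂ => z.im * normSq (1 + (starRingEnd ℂ) c * t)) :=
      continuous_const.mul (Complex.continuous_normSq.comp
        (continuous_const.add (continuous_const.mul continuous_id)))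
    have := (hcont.tendsto 0).comp hq0
    simpa [Function.comp_def] using this
  have hder : HasDerivAt f ((v₁ : ℝ) : ℂ) (x₁ : ℂ) := by
    have := hx.differentiableAt.hasDerivAt
    rwa [hd] at this
  have hslope := hasDerivAt_iff_tendsto_slope.mp hder
  have hwyne : Tendsto wy (nhdsWithin 0 (Ioi 0)) (nhdsWithin (x₁:ℂ) {(x₁:ℂ)}ᶜ) := by
    apply tendsto_nhdsWithin_of_tendsto_nhds_of_eventually_within _ hwy0
    filter_upwards [self_mem_nhdsWithin] with y hy
    rw [mem_Ioi] at hy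
    simp only [mem_compl_iff, mem_singleton_iff]
    intro h0
    have := congrArg Complex.im h0
    simp [hwy] at this
    linarith
  have ht : Tendsto (fun y => slope f (x₁:ℂ) (wy y)) (nhdsWithin 0 (Ioi 0))
      (nhds ((v₁:ℝ):ℂ)) := hslope.comp hwyne
  have parta : Tendsto (fun y => (q y).im / y) (nhdsWithin 0 (Ioi 0)) (nhds v₁) := by
    have hre : Tendsto (fun y => (slope f (x₁:ℂ) (wy y)).re) (nhdsWithin 0 (Ioi 0))
        (nhds v₁) := by
      have := (Complex.continuous_re.tendsto _).comp ht
      simpa [Function.comp_def] using this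
    apply hre.congr'
    filter_upwards [self_mem_nhdsWithin] with y hy
    rw [mem_Ioi] at hy
    have hyne : (y : ℂ) * I ≠ 0 := by
      simp [Complex.I_ne_zero]
      exact_mod_cast hy.ne'
    have hsl : slope f (x₁:ℂ) (wy y) = q y / ((y:ℝ) * I) := by
      rw [slope_def_field, hqdef, hwy, hw]
      simp
    have hqeq : q y = slope f (x₁:ℂ) (wy y) * ((y:ℝ) * I) := by
      rw [hsl, div_mul_cancel₀ _ hyne]
    rw [hqeq]
    have : (slope f (x₁:ℂ) (wy y) * ((y:ℝ) * I)).im = y * (slope f (x₁:ℂ) (wy y)).re := by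
      simp [Complex.mul_im, Complex.mul_re]
      ring
    rw [this]
    field_simp
  have partb : Tendsto (fun y => normSq (wy y - (starRingEnd ℂ) z)) (nhdsWithin 0 (Ioi 0))
      (nhds (normSq ((x₁:ℂ) - (starRingEnd ℂ) z))) := by
    have hcont : Continuous (fun t : ℂ => normSq (t - (starRingEnd ℂ) z)) :=
      Complex.continuous_normSq.comp (continuous_id.sub continuous_const)
    exact (hcont.tendsto _).comp hwy0
  have L2 : Tendsto (fun y => ((q y).im / y) * c.im * normSq (wy y - (starRingEnd ℂ) z))
      (nhdsWithin 0 (Ioi 0)) (nhds (v₁ * c.im * normSq ((x₁:ℂ) - (starRingEnd ℂ) z))) :=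
    (parta.mul_const c.im).mul partb
  have key : z.im ≤ v₁ * c.im * normSq ((x₁:ℂ) - (starRingEnd ℂ) z) := by
    apply le_of_tendsto_of_tendsto L1 L2
    exact Filter.eventually_iff_exists_mem.mpr ⟨Ioi 0, self_mem_nhdsWithin, hineq⟩
  have hNid : normSq ((x₁:ℂ) - (starRingEnd ℂ) z) = normSq (z - (x₁:ℂ)) := by
    have : (x₁:ℂ) - (starRingEnd ℂ) z = (starRingEnd ℂ) ((x₁:ℂ) - z) := by
      simp [map_sub, Complex.conj_ofReal]
    rw [this, normSq_conj, ← normSq_neg, neg_sub]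
  rw [hNid] at key
  -- finish
  have hzx : z - (x₁:ℂ) ≠ 0 := by
    intro h0
    have := congrArg Complex.im h0
    simp at this
    linarith
  have hN : 0 < normSq (z - (x₁:ℂ)) := normSq_pos.mpr hzx
  set N := normSq (z - (x₁:ℂ)) with hNdef
  have hA : ((1:ℂ) / ((v₁:ℂ) * (z - (x₁:ℂ)))).im = -(z.im / (v₁ * N)) := by
    rw [one_div, Complex.inv_im]
    have h1 : ((v₁:ℂ) * (z - (x₁:ℂ))).im = v₁ * z.im := by
      simp [Complex.mul_im]
    have h2 : normSq ((v₁:ℂ) * (z - (x₁:ℂ))) = v₁^2 * N := by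
      rw [normSq_mul, Complex.normSq_ofReal]
      ring
    rw [h1, h2]
    field_simp
  have hsub : (1 / ((v₁ : ℂ) * (z - (x₁ : ℂ))) - 1 / (f z - (w₁ : ℂ))).im
      = ((1:ℂ) / ((v₁:ℂ) * (z - (x₁:ℂ)))).im + c.im := by
    rw [Complex.sub_im, hc, hh]
    simp
    ring
  rw [hsub, hA]
  have hvN : 0 < v₁ * N := mul_pos hv hN
  have : z.im / (v₁ * N) ≤ c.im := by
    rw [div_le_iff₀ hvN]
    linarith
  linarith

lemma analyticAt_dslope_of_analyticAt {f : ℂ → ℂ} {z₀ : ℂ} (hf : AnalyticAt ℂ f z₀) :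
    AnalyticAt ℂ (dslope f z₀) z₀ := by
  obtain ⟨p, hp⟩ := hf
  exact ⟨p.fslope, hp.has_fpower_series_dslope_fslope⟩

lemma reduction_extends (f : ℂ → ℂ) (x₁ w₁ v₁ : ℝ) (hv : 0 < v₁)
    (hx : AnalyticAt ℂ f (x₁ : ℂ))
    (hw : f (x₁ : ℂ) = (w₁ : ℂ)) (hd : deriv f (x₁ : ℂ) = (v₁ : ℂ)) :
    ∃ G : ℂ → ℂ, AnalyticAt ℂ G (x₁ : ℂ) ∧
      ∀ᶠ z in nhdsWithin (x₁ : ℂ) {(x₁ : ℂ)}ᶜ,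
        G z = 1 / ((v₁ : ℂ) * (z - (x₁ : ℂ))) - 1 / (f z - (w₁ : ℂ)) := by
  set u : ℂ → ℂ := dslope f (x₁ : ℂ) with hu
  have hua : AnalyticAt ℂ u (x₁ : ℂ) := analyticAt_dslope_of_analyticAt hx
  have hux : u (x₁ : ℂ) = (v₁ : ℂ) := by rw [hu, dslope_same, hd]
  have hvne : ((v₁ : ℝ) : ℂ) ≠ 0 := by exact_mod_cast hv.ne'
  refine ⟨fun z => dslope u (x₁ : ℂ) z / ((v₁ : ℂ) * u z), ?_, ?_⟩
  · apply AnalyticAt.div (analyticAt_dslope_of_analyticAt hua)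
      (analyticAt_const.mul hua)
    rw [Pi.mul_apply, hux]
    exact mul_ne_zero hvne hvne
  · have hune : ∀ᶠ z in nhds (x₁ : ℂ), u z ≠ 0 := by
      apply hua.continuousAt.eventually_ne
      rw [hux]; exact hvne
    filter_upwards [eventually_nhdsWithin_of_eventually_nhds hune, self_mem_nhdsWithin]
      with z huz hzx
    have hzx' : z ≠ (x₁ : ℂ) := hzx
    have hzs : z - (x₁ : ℂ) ≠ 0 := sub_ne_zero.mpr hzx'
    have hfz : f z - (w₁ : ℂ) = (z - (x₁ : ℂ)) * u z := by
      rw [hu, dslope_of_ne _ hzx', slope_def_field, hw]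
      field_simp
    have hds : dslope u (x₁ : ℂ) z = (u z - (v₁ : ℂ)) / (z - (x₁ : ℂ)) := by
      rw [dslope_of_ne _ hzx', slope_def_field, hux]
    rw [hds, hfz]
    field_simp

/-- if `f` is a nonconstant Pick function, analytic and real-valued
near `x₁` with `f x₁ = w₁` and `f' x₁ = v₁ > 0`, then the reduction
`g z = 1/(v₁ (z - x₁)) - 1/(f z - w₁)` extends analytically to `x₁`, and `g` is
a Pick function (differentiable on the upper half-plane with nonnegative
imaginary part). -/
theorem reduction_is_pick (f : ℂ → ℂ)
    (hf : ∀ z : ℂ, 0 < z.im → DifferentiableAt ℂ f z ∧ 0 ≤ (f z).im)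
    (hnonconst : ¬ ∃ c : ℂ, ∀ z : ℂ, 0 < z.im → f z = c)
    (x₁ w₁ v₁ : ℝ) (hv : 0 < v₁)
    (hx : AnalyticAt ℂ f (x₁ : ℂ))
    (hreal : ∀ᶠ t : ℝ in nhds x₁, (f (t : ℂ)).im = 0)
    (hw : f (x₁ : ℂ) = (w₁ : ℂ)) (hd : deriv f (x₁ : ℂ) = (v₁ : ℂ))
    (g : ℂ → ℂ)
    (hg : ∀ z : ℂ, g z = 1 / ((v₁ : ℂ) * (z - (x₁ : ℂ))) - 1 / (f z - (w₁ : ℂ))) :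
    (∀ z : ℂ, 0 < z.im → DifferentiableAt ℂ g z ∧ 0 ≤ (g z).im) ∧
    (∃ G : ℂ → ℂ, AnalyticAt ℂ G (x₁ : ℂ) ∧
      ∀ᶠ z in nhdsWithin (x₁ : ℂ) {(x₁ : ℂ)}ᶜ, G z = g z) := by
  have hgfun : g = fun z => 1 / ((v₁ : ℂ) * (z - (x₁ : ℂ))) - 1 / (f z - (w₁ : ℂ)) :=
    funext hg
  subst hgfun
  have Him : ∀ z : ℂ, 0 < z.im → 0 < (f z).im := pick_im_pos f hf hnonconst
  constructor
  · intro z hz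
    have hfz : f z - (w₁ : ℂ) ≠ 0 := by
      intro h0
      have h1 : (f z - (w₁:ℂ)).im = (f z).im := by simp
      rw [h0] at h1
      simp at h1
      linarith [Him z hz]
    have hvne : ((v₁ : ℝ) : ℂ) ≠ 0 := by exact_mod_cast hv.ne'
    have hzx : (v₁ : ℂ) * (z - (x₁ : ℂ)) ≠ 0 := by
      apply mul_ne_zero hvne
      intro h0
      have := congrArg Complex.im h0
      simp at this
      linarith
    refine ⟨DifferentiableAt.sub
      ((differentiableAt_const 1).div (by fun_prop) hzx)
      ((differentiableAt_const 1).div ((hf z hz).1.sub_const _) hfz), ?_⟩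
    exact pick_reduction_im_nonneg f (fun u hu => (hf u hu).1) Him x₁ w₁ v₁ hv hx hw hd hz
  · exact reduction_extends f x₁ w₁ v₁ hv hx hw hd
end

section
/- Let g be a Pick function analytic at x₁ ∈ ℝ, and let w₁ ∈ ℝ, v₁ > 0. Define the augmentation f(z) = w₁ + 1/(1/(v₁(z − x₁)) − g(z)). Then f is a Pick function, f is analytic at x₁, f(x₁) = w₁, and f'(x₁) = v₁. -/
open Complex

/-- augmentation at a point of analyticity. If `g` is a Pick
function analytic and real-valued near `x₁` and `v₁ > 0`, then
`f z = w₁ + 1/(1/(v₁ (z - x₁)) - g z)` is a Pick function on the upper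
half-plane and extends analytically to `x₁` with value `w₁` and derivative
`v₁`. -/
theorem augmentation_at_regular_point (g : ℂ → ℂ)
    (hg : ∀ z : ℂ, 0 < z.im → DifferentiableAt ℂ g z ∧ 0 ≤ (g z).im)
    (x₁ w₁ v₁ : ℝ) (hv : 0 < v₁)
    (hx : AnalyticAt ℂ g (x₁ : ℂ))
    (hreal : ∀ᶠ t : ℝ in nhds x₁, (g (t : ℂ)).im = 0)
    (f : ℂ → ℂ)
    (hf : ∀ z : ℂ, f z = (w₁ : ℂ) + 1 / (1 / ((v₁ : ℂ) * (z - (x₁ : ℂ))) - g z)) :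
    (∀ z : ℂ, 0 < z.im → DifferentiableAt ℂ f z ∧ 0 ≤ (f z).im) ∧
    (∃ F : ℂ → ℂ, AnalyticAt ℂ F (x₁ : ℂ) ∧
      (∀ᶠ z in nhdsWithin (x₁ : ℂ) {(x₁ : ℂ)}ᶜ, F z = f z) ∧
      F (x₁ : ℂ) = (w₁ : ℂ) ∧ deriv F (x₁ : ℂ) = (v₁ : ℂ)) := by
  have hfun : f = fun z => (w₁ : ℂ) + 1 / (1 / ((v₁ : ℂ) * (z - (x₁ : ℂ))) - g z) :=
    funext hf
  constructor
  · intro z hz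
    have ha_im : 0 < ((v₁ : ℂ) * (z - (x₁ : ℂ))).im := by
      simp [Complex.mul_im]
      positivity
    have ha_ne : ((v₁ : ℂ) * (z - (x₁ : ℂ))) ≠ 0 := by
      intro h; rw [h] at ha_im; simp at ha_im
    have hinv_im : ((1 : ℂ) / ((v₁ : ℂ) * (z - (x₁ : ℂ)))).im < 0 := by
      rw [one_div, Complex.inv_im]
      have : 0 < Complex.normSq ((v₁ : ℂ) * (z - (x₁ : ℂ))) :=
        Complex.normSq_pos.mpr ha_ne
      exact div_neg_of_neg_of_pos (by linarith) this
    have hden_im : ((1 : ℂ) / ((v₁ : ℂ) * (z - (x₁ : ℂ))) - g z).im < 0 := by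
      have := (hg z hz).2
      rw [Complex.sub_im]; linarith
    have hden_ne : ((1 : ℂ) / ((v₁ : ℂ) * (z - (x₁ : ℂ))) - g z) ≠ 0 := by
      intro h; rw [h] at hden_im; simp at hden_im
    constructor
    · rw [hfun]
      have h1 : DifferentiableAt ℂ (fun w : ℂ => (1 : ℂ) / ((v₁ : ℂ) * (w - (x₁ : ℂ)))) z :=
        (differentiableAt_const _).div
          ((differentiableAt_const _).mul (differentiableAt_id.sub (differentiableAt_const _)))
          ha_ne
      have h2 : DifferentiableAt ℂ
          (fun w : ℂ => (1 : ℂ) / ((v₁ : ℂ) * (w - (x₁ : ℂ))) - g w) z :=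
        h1.sub (hg z hz).1
      exact (differentiableAt_const _).add ((differentiableAt_const _).div h2 hden_ne)
    · rw [hf z, Complex.add_im, Complex.ofReal_im, one_div, Complex.inv_im]
      have h1 : (0:ℝ) ≤ -((1 : ℂ) / ((v₁ : ℂ) * (z - (x₁ : ℂ))) - g z).im := by linarith
      have h2 := Complex.normSq_nonneg ((1 : ℂ) / ((v₁ : ℂ) * (z - (x₁ : ℂ))) - g z)
      have := div_nonneg h1 h2
      linarith
  · refine ⟨fun z => (w₁ : ℂ) + (v₁ : ℂ) * (z - (x₁ : ℂ)) / (1 - (v₁ : ℂ) * (z - (x₁ : ℂ)) * g z),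
      ?_, ?_, by simp, ?_⟩
    · have h1 : AnalyticAt ℂ (fun z : ℂ => (v₁ : ℂ) * (z - (x₁ : ℂ))) (x₁ : ℂ) :=
        analyticAt_const.mul ((analyticAt_id).sub analyticAt_const)
      exact analyticAt_const.add
        (h1.div (analyticAt_const.sub (h1.mul hx)) (by simp))
    · filter_upwards [self_mem_nhdsWithin] with z hz
      have hz' : z ≠ (x₁ : ℂ) := hz
      have ha : ((v₁ : ℂ) * (z - (x₁ : ℂ))) ≠ 0 :=
        mul_ne_zero (by exact_mod_cast hv.ne') (sub_ne_zero.2 hz')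
      rw [hf z]
      have key : (1 : ℂ) / ((v₁ : ℂ) * (z - (x₁ : ℂ))) - g z
          = (1 - (v₁ : ℂ) * (z - (x₁ : ℂ)) * g z) / ((v₁ : ℂ) * (z - (x₁ : ℂ))) := by
        have hv0 : (v₁ : ℂ) ≠ 0 := by exact_mod_cast hv.ne'
        field_simp
      rw [key, one_div_div]
    · have hq : HasDerivAt (fun z : ℂ => (v₁ : ℂ) * (z - (x₁ : ℂ))) (v₁ : ℂ) (x₁ : ℂ) := by
        simpa using ((hasDerivAt_id ((x₁ : ℂ))).sub_const ((x₁ : ℂ))).const_mul (v₁ : ℂ)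
      have hgd : HasDerivAt g (deriv g (x₁ : ℂ)) (x₁ : ℂ) := hx.differentiableAt.hasDerivAt
      have hd : HasDerivAt (fun z : ℂ => 1 - (v₁ : ℂ) * (z - (x₁ : ℂ)) * g z)
          (0 - ((v₁ : ℂ) * g (x₁ : ℂ) + (v₁ : ℂ) * ((x₁ : ℂ) - (x₁ : ℂ)) * deriv g (x₁ : ℂ)))
          (x₁ : ℂ) := (hasDerivAt_const _ (1:ℂ)).sub (hq.mul hgd)
      have hquot := hq.div hd (by simp)
      have hF : HasDerivAt (fun z : ℂ => (w₁ : ℂ) + (v₁ : ℂ) * (z - (x₁ : ℂ)) /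
          (1 - (v₁ : ℂ) * (z - (x₁ : ℂ)) * g z)) (v₁ : ℂ) (x₁ : ℂ) := by
        have := (hasDerivAt_const (x₁ : ℂ) ((w₁ : ℂ))).add hquot
        refine this.congr_deriv ?_
        simp
      exact hF.deriv
end

section
/- Let g be a Pick function that is meromorphic at x₁ ∈ ℝ with a simple pole at x₁ (necessarily with negative residue), and let w₁ ∈ ℝ, v₁ > 0. Then the augmentation f(z) = w₁ + 1/(1/(v₁(z − x₁)) − g(z)) is analytic at x₁, satisfies f(x₁) = w₁, and f'(x₁) < v₁ (strict inequality). -/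
open Complex

/-- augmentation at a pole. If the Pick function `g` has a simple
pole at `x₁` with (real, nonzero, necessarily negative) residue `R`, and is
real-valued on a punctured real neighbourhood of `x₁`, then the augmentation
`f z = w₁ + 1/(1/(v₁ (z - x₁)) - g z)` extends analytically to `x₁` with value
`w₁` and real derivative strictly less than `v₁`. -/
theorem augmentation_at_pole (g : ℂ → ℂ)
    (hg : ∀ z : ℂ, 0 < z.im → DifferentiableAt ℂ g z ∧ 0 ≤ (g z).im)
    (x₁ w₁ v₁ : ℝ) (hv : 0 < v₁)
    (R : ℝ) (hR : R ≠ 0)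
    (G : ℂ → ℂ) (hG : AnalyticAt ℂ G (x₁ : ℂ))
    (hpole : ∀ᶠ z in nhdsWithin (x₁ : ℂ) {(x₁ : ℂ)}ᶜ,
      g z = (R : ℂ) / (z - (x₁ : ℂ)) + G z)
    (hreal : ∀ᶠ t : ℝ in nhdsWithin x₁ {x₁}ᶜ, (g (t : ℂ)).im = 0)
    (f : ℂ → ℂ)
    (hf : ∀ z : ℂ, f z = (w₁ : ℂ) + 1 / (1 / ((v₁ : ℂ) * (z - (x₁ : ℂ))) - g z)) :
    ∃ F : ℂ → ℂ, AnalyticAt ℂ F (x₁ : ℂ) ∧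
      (∀ᶠ z in nhdsWithin (x₁ : ℂ) {(x₁ : ℂ)}ᶜ, F z = f z) ∧
      F (x₁ : ℂ) = (w₁ : ℂ) ∧
      (deriv F (x₁ : ℂ)).im = 0 ∧ (deriv F (x₁ : ℂ)).re < v₁ := by
  -- Step 1: R < 0
  have hφ : Filter.Tendsto (fun ε : ℝ => (x₁:ℂ) + ε*I) (nhdsWithin 0 (Set.Ioi 0))
      (nhdsWithin (x₁:ℂ) {(x₁:ℂ)}ᶜ) := by
    rw [tendsto_nhdsWithin_iff]
    constructor
    · have : Continuous (fun ε : ℝ => (x₁:ℂ) + ε*I) := by continuity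
      simpa using (this.tendsto 0).mono_left nhdsWithin_le_nhds
    · filter_upwards [self_mem_nhdsWithin] with ε (hε : ε ∈ Set.Ioi 0)
      simp only [Set.mem_compl_iff, Set.mem_singleton_iff]
      intro h
      have := congrArg Complex.im h
      simp at this
      exact absurd this (ne_of_gt hε)
  have hRneg : R < 0 := by
    have hle : R ≤ 0 := by
      have hev : ∀ᶠ ε : ℝ in nhdsWithin 0 (Set.Ioi 0),
          R ≤ ε * (G ((x₁:ℂ) + ε*I)).im := by
        filter_upwards [hφ.eventually hpole, self_mem_nhdsWithin] with ε hpε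
          (hε : ε ∈ Set.Ioi 0)
        have hε0 : 0 < ε := hε
        have him : 0 ≤ (g ((x₁:ℂ) + ε*I)).im := (hg _ (by simpa using hε0)).2
        rw [hpε] at him
        have hdiv : (((R:ℂ)) / (((x₁:ℂ) + ε*I) - (x₁:ℂ))).im = -(R/ε) := by
          have : ((x₁:ℂ) + ε*I) - (x₁:ℂ) = (ε:ℝ)*I := by ring
          rw [this]
          simp [Complex.div_im]
          rw [mul_div_mul_right _ _ hε0.ne']
        rw [Complex.add_im, hdiv] at him
        have h1 : R / ε ≤ (G ((x₁:ℂ) + ε*I)).im := by linarith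
        calc R = (R / ε) * ε := by field_simp
          _ ≤ (G ((x₁:ℂ) + ε*I)).im * ε := by
              exact mul_le_mul_of_nonneg_right h1 hε0.le
          _ = ε * (G ((x₁:ℂ) + ε*I)).im := by ring
      have hlim : Filter.Tendsto (fun ε : ℝ => ε * (G ((x₁:ℂ) + ε*I)).im)
          (nhdsWithin 0 (Set.Ioi 0)) (nhds 0) := by
        have hc : Continuous (fun ε : ℝ => (x₁:ℂ) + ε*I) := by continuity
        have hto : Filter.Tendsto (fun ε : ℝ => (x₁:ℂ) + ε*I)
            (nhdsWithin 0 (Set.Ioi 0)) (nhds (x₁:ℂ)) := by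
          simpa using ((hc.tendsto 0).mono_left nhdsWithin_le_nhds)
        have hGc : Filter.Tendsto (fun ε : ℝ => (G ((x₁:ℂ) + ε*I)).im)
            (nhdsWithin 0 (Set.Ioi 0)) (nhds (G (x₁:ℂ)).im) :=
          (Complex.continuous_im.tendsto _).comp (hG.continuousAt.tendsto.comp hto)
        have hid : Filter.Tendsto (fun ε : ℝ => ε) (nhdsWithin 0 (Set.Ioi 0)) (nhds 0) :=
          Filter.tendsto_id.mono_left nhdsWithin_le_nhds
        simpa using hid.mul hGc
      exact ge_of_tendsto hlim hev
    exact lt_of_le_of_ne hle hR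
  -- Step 2: define c and F
  set c : ℝ := 1/v₁ - R with hc_def
  have hc : 0 < c := by
    have : 0 < 1/v₁ := by positivity
    simp only [hc_def]; linarith
  have hcC : (c:ℂ) = 1/(v₁:ℂ) - (R:ℂ) := by push_cast [hc_def]; ring
  set D : ℂ → ℂ := fun z => (c:ℂ) - (z - (x₁:ℂ)) * G z with hD_def
  have hD0 : D (x₁:ℂ) = (c:ℂ) := by simp [hD_def]
  have hDne : D (x₁:ℂ) ≠ 0 := by
    rw [hD0]; exact_mod_cast (ne_of_gt hc)
  have hDan : AnalyticAt ℂ D (x₁:ℂ) := by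
    apply (analyticAt_const).sub
    exact ((analyticAt_id.sub analyticAt_const)).mul hG
  refine ⟨fun z => (w₁:ℂ) + (z - (x₁:ℂ)) / D z, ?_, ?_, ?_, ?_⟩
  · apply analyticAt_const.add
    exact (analyticAt_id.sub analyticAt_const).div hDan hDne
  · filter_upwards [hpole, self_mem_nhdsWithin] with z hz hz'
    have hzne : z - (x₁:ℂ) ≠ 0 := sub_ne_zero.mpr hz'
    rw [hf z, hz]
    congr 1
    have key : (1:ℂ)/((v₁:ℂ)*(z - (x₁:ℂ))) - ((R:ℂ)/(z-(x₁:ℂ)) + G z)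
        = D z / (z - (x₁:ℂ)) := by
      rw [hD_def, hcC]
      have hvne : (v₁:ℂ) ≠ 0 := by exact_mod_cast hv.ne'
      field_simp
      ring
    rw [key, one_div_div]
  · simp [hD0]
  -- derivative
  · have hnum : HasDerivAt (fun z : ℂ => z - (x₁:ℂ)) 1 (x₁:ℂ) := by
      simpa using (hasDerivAt_id ((x₁:ℂ))).sub_const (x₁:ℂ)
    have hDder : HasDerivAt D (-(1 * G (x₁:ℂ) + ((x₁:ℂ) - (x₁:ℂ)) * deriv G (x₁:ℂ))) (x₁:ℂ) := by
      rw [hD_def]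
      have h : HasDerivAt (fun z : ℂ => (c:ℂ) - (z - (x₁:ℂ)) * G z)
          ((0:ℂ) - (1 * G (x₁:ℂ) + ((x₁:ℂ) - (x₁:ℂ)) * deriv G (x₁:ℂ))) (x₁:ℂ) :=
        (hasDerivAt_const _ (c:ℂ)).sub (hnum.mul (hG.differentiableAt.hasDerivAt))
      simpa using h
    have hq : HasDerivAt (fun z : ℂ => (z - (x₁:ℂ)) / D z)
        ((1 * D (x₁:ℂ) - ((x₁:ℂ) - (x₁:ℂ)) * (-(1 * G (x₁:ℂ) + ((x₁:ℂ) - (x₁:ℂ)) * deriv G (x₁:ℂ)))) / D (x₁:ℂ) ^ 2) (x₁:ℂ) :=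
      hnum.div hDder hDne
    have hF : HasDerivAt (fun z : ℂ => (w₁:ℂ) + (z - (x₁:ℂ)) / D z)
        ((1 * D (x₁:ℂ) - ((x₁:ℂ) - (x₁:ℂ)) * (-(1 * G (x₁:ℂ) + ((x₁:ℂ) - (x₁:ℂ)) * deriv G (x₁:ℂ)))) / D (x₁:ℂ) ^ 2) (x₁:ℂ) :=
      hq.const_add _
    have hdval : deriv (fun z : ℂ => (w₁:ℂ) + (z - (x₁:ℂ)) / D z) (x₁:ℂ) = 1/(c:ℂ) := by
      rw [hF.deriv, hD0]
      have : (c:ℂ) ≠ 0 := by exact_mod_cast hc.ne'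
      field_simp
      ring
    have hcast : (1/(c:ℂ)) = ((1/c : ℝ) : ℂ) := by push_cast; ring
    rw [hdval, hcast]
    constructor
    · simp
    · simp only [Complex.ofReal_re]
      rw [div_lt_iff₀ hc]
      have h1 : v₁ * c = 1 - v₁ * R := by
        rw [hc_def]; field_simp
      nlinarith [mul_pos hv (neg_pos.mpr hRneg)]
end

section
/- Let g be a Pick function with a simple pole at the real point x_j of residue R_j ≤ −1/v_j with v_j > 0, and let f(z) = w₁ + 1/(1/(v₁(z−x₁)) − g(z)) with x₁ ≠ x_j, w₁, v₁ > 0 real. Then f extends analytically to x_j with f(x_j) = w₁ and f'(x_j) = −1/R_j ≤ v_j. -/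
open Complex

/-- augmentation through a pole of the reduced solution. If the
Pick function `g` has a simple pole at `x_j` of residue `R ≤ -1/v_j` (with
`v_j > 0`) and `f z = w₁ + 1/(1/(v₁ (z - x₁)) - g z)` with `x₁ ≠ x_j` and
`v₁ > 0`, then `f` extends analytically to `x_j` with value `w₁` and
derivative `-1/R ≤ v_j`. -/
theorem augmentation_through_pole (g : ℂ → ℂ)
    (hg : ∀ z : ℂ, 0 < z.im → DifferentiableAt ℂ g z ∧ 0 ≤ (g z).im)
    (x₁ xj w₁ v₁ vj : ℝ) (hx : x₁ ≠ xj) (hv₁ : 0 < v₁) (hvj : 0 < vj)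
    (R : ℝ) (hR : R ≤ -1 / vj)
    (G : ℂ → ℂ) (hG : AnalyticAt ℂ G (xj : ℂ))
    (hpole : ∀ᶠ z in nhdsWithin (xj : ℂ) {(xj : ℂ)}ᶜ,
      g z = (R : ℂ) / (z - (xj : ℂ)) + G z)
    (f : ℂ → ℂ)
    (hf : ∀ z : ℂ, f z = (w₁ : ℂ) + 1 / (1 / ((v₁ : ℂ) * (z - (x₁ : ℂ))) - g z)) :
    ∃ F : ℂ → ℂ, AnalyticAt ℂ F (xj : ℂ) ∧
      (∀ᶠ z in nhdsWithin (xj : ℂ) {(xj : ℂ)}ᶜ, F z = f z) ∧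
      F (xj : ℂ) = (w₁ : ℂ) ∧
      deriv F (xj : ℂ) = ((-1 / R : ℝ) : ℂ) ∧ -1 / R ≤ vj := by
  -- basic sign facts
  have hRneg : R < 0 :=
    lt_of_le_of_lt hR (div_neg_of_neg_of_pos (by norm_num) hvj)
  have hR0 : (R : ℂ) ≠ 0 := by
    exact_mod_cast (ne_of_lt hRneg)
  have hx0 : (v₁ : ℂ) * ((xj : ℂ) - (x₁ : ℂ)) ≠ 0 := by
    apply mul_ne_zero
    · exact_mod_cast hv₁.ne'
    · intro h
      exact hx (by exact_mod_cast (sub_eq_zero.mp h).symm)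
  -- auxiliary analytic functions
  set u : ℂ → ℂ := fun z => 1 / ((v₁ : ℂ) * (z - (x₁ : ℂ))) - G z with hu
  have hu_an : AnalyticAt ℂ u (xj : ℂ) := by
    apply AnalyticAt.sub _ hG
    exact (analyticAt_const).div ((analyticAt_const).mul ((analyticAt_id).sub analyticAt_const)) hx0
  set D : ℂ → ℂ := fun z => (z - (xj : ℂ)) * u z - (R : ℂ) with hD
  have hD_an : AnalyticAt ℂ D (xj : ℂ) :=
    (((analyticAt_id).sub analyticAt_const).mul hu_an).sub analyticAt_const
  have hDxj : D (xj : ℂ) = -(R : ℂ) := by simp [hD]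
  have hD0 : D (xj : ℂ) ≠ 0 := by rw [hDxj]; exact neg_ne_zero.mpr hR0
  set F : ℂ → ℂ := fun z => (w₁ : ℂ) + (z - (xj : ℂ)) / D z with hF
  refine ⟨F, ?_, ?_, ?_, ?_, ?_⟩
  · exact (analyticAt_const).add
      (((analyticAt_id).sub analyticAt_const).div hD_an hD0)
  · -- F = f on the punctured neighborhood
    filter_upwards [hpole, self_mem_nhdsWithin] with z hz hz'
    have hzxj : z - (xj : ℂ) ≠ 0 := sub_ne_zero.mpr hz'
    rw [hf z, hF]
    congr 1
    have h1 : 1 / ((v₁ : ℂ) * (z - (x₁ : ℂ))) - g z = D z / (z - (xj : ℂ)) := by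
      rw [hz, hD, hu]
      field_simp
      ring
    rw [h1, one_div, inv_div]
  · simp [hF, hDxj]
  · -- derivative computation
    have hu_diff : DifferentiableAt ℂ u (xj : ℂ) := hu_an.differentiableAt
    have hNd : HasDerivAt (fun z : ℂ => z - (xj : ℂ)) 1 (xj : ℂ) :=
      (hasDerivAt_id _).sub_const _
    have hDd : HasDerivAt D (u (xj : ℂ)) (xj : ℂ) := by
      have := (hNd.mul (hu_diff.hasDerivAt)).sub_const (R : ℂ)
      simpa [hD] using this
    have hq : HasDerivAt (fun z => (z - (xj : ℂ)) / D z)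
        ((1 * D (xj : ℂ) - ((xj : ℂ) - (xj : ℂ)) * u (xj : ℂ)) / (D (xj : ℂ))^2) (xj : ℂ) :=
      hNd.div hDd hD0
    have hFd : HasDerivAt F
        ((1 * D (xj : ℂ) - ((xj : ℂ) - (xj : ℂ)) * u (xj : ℂ)) / (D (xj : ℂ))^2) (xj : ℂ) :=
      hq.const_add _
    rw [hFd.deriv, hDxj]
    push_cast
    field_simp
    ring
  · -- the inequality
    rw [div_le_iff_of_neg hRneg]
    have h1 : R * vj ≤ -1 := by
      have := mul_le_mul_of_nonneg_right hR hvj.le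
      rwa [div_mul_cancel₀] at this
      exact hvj.ne'
    nlinarith
end

section
/- Let f : Π → ℂ be analytic on the upper half-plane Π with Im f ≥ 0, and suppose at distinct real points x₁,…,xₙ the function f extends analytically with real values f(x_j) = w_j and derivatives f'(x_j). Then the n×n matrix M' with entries M'_{ij} = (w_i − w_j)/(x_i − x_j) for i ≠ j and M'_{jj} = f'(x_j) is positive semidefinite. -/
open Complex Matrix Metric intervalIntegral Real Finset Filter Set

lemma repro {r : ℝ} (hr : 0 < r) {h : ℂ → ℂ} (hd : DiffContOnCl ℂ h (ball (0:ℂ) r))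
    {u : ℂ} (hu : ‖u‖ < r) :
    ∫ θ in (0:ℝ)..(2*π), h (circleMap 0 r θ) *
      (starRingEnd ℂ) ((r:ℂ)^2 / ((r:ℂ)^2 - (starRingEnd ℂ) u * circleMap 0 r θ))
      = 2 * π * h u := by
  have hmem : u ∈ ball (0:ℂ) r := by simpa [mem_ball, dist_eq_norm] using hu
  have hC := hd.circleIntegral_sub_inv_smul hmem
  have key : ∀ θ : ℝ, h (circleMap 0 r θ) *
      (starRingEnd ℂ) ((r:ℂ)^2 / ((r:ℂ)^2 - (starRingEnd ℂ) u * circleMap 0 r θ))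
      = (-I) * (deriv (circleMap 0 r) θ • ((circleMap 0 r θ - u)⁻¹ • h (circleMap 0 r θ))) := by
    intro θ
    set γ := circleMap 0 r θ with hγ
    have hγabs : ‖γ‖ = r := by
      rw [hγ, norm_circleMap_zero, abs_of_pos hr]
    have hγ0 : γ ≠ 0 := by
      intro h0; rw [h0] at hγabs; simp at hγabs; exact hr.ne' hγabs.symm
    have hγu : γ - u ≠ 0 := by
      intro h0
      have h1 : u = γ := (sub_eq_zero.mp h0).symm
      rw [h1, hγabs] at hu; exact lt_irrefl _ hu
    have hr2 : (r:ℂ)^2 ≠ 0 := by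
      exact pow_ne_zero 2 (Complex.ofReal_ne_zero.mpr hr.ne')
    have hden : (r:ℂ)^2 - (starRingEnd ℂ) u * γ ≠ 0 := by
      intro h0
      have h1 : ‖((starRingEnd ℂ) u * γ)‖ = ‖u‖ * r := by
        rw [norm_mul, Complex.norm_conj, hγabs]
      have h2 : (r:ℝ)^2 = ‖u‖ * r := by
        have h3 := sub_eq_zero.mp h0
        calc (r:ℝ)^2 = ‖((r:ℂ)^2)‖ := by
              rw [norm_pow, Complex.norm_real, Real.norm_eq_abs, abs_of_pos hr]
          _ = ‖u‖ * r := by rw [h3, h1]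
      nlinarith [norm_nonneg u]
    have hconjγ : (starRingEnd ℂ) γ = (r:ℂ)^2 / γ := by
      rw [eq_div_iff hγ0, mul_comm, Complex.mul_conj, Complex.normSq_eq_norm_sq, hγabs]
      norm_cast
    have key1 : (starRingEnd ℂ) ((r:ℂ)^2 / ((r:ℂ)^2 - (starRingEnd ℂ) u * γ))
        = γ / (γ - u) := by
      rw [_root_.map_div₀, _root_.map_pow, Complex.conj_ofReal, _root_.map_sub, _root_.map_pow, Complex.conj_ofReal,
        _root_.map_mul, Complex.conj_conj, hconjγ]
      have hd3 : (r:ℂ)^2 - u * ((r:ℂ)^2/γ) = ((r:ℂ)^2 * (γ - u))/γ := by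
        field_simp
      rw [hd3, div_div_eq_mul_div, mul_div_mul_left _ _ hr2]
    rw [deriv_circleMap]
    simp only [smul_eq_mul, ← hγ]
    rw [key1]
    have h5 : -I * (γ * I * ((γ - u)⁻¹ * h γ)) = (-(I*I)) * (γ * ((γ - u)⁻¹ * h γ)) := by ring
    rw [h5, Complex.I_mul_I, neg_neg, one_mul]
    rw [div_eq_mul_inv]; ring
  rw [intervalIntegral.integral_congr (g := fun θ => (-I) * (deriv (circleMap 0 r) θ • ((circleMap 0 r θ - u)⁻¹ • h (circleMap 0 r θ)))) (fun θ _ => key θ)]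
  rw [intervalIntegral.integral_const_mul]
  have heq : (∫ θ in (0:ℝ)..(2*π), deriv (circleMap 0 r) θ • ((circleMap 0 r θ - u)⁻¹ • h (circleMap 0 r θ))) = ∮ z in C(0, r), (z - u)⁻¹ • h z := rfl
  rw [heq, hC]
  simp only [smul_eq_mul]
  linear_combination (-2*(π:ℂ)*h u)*Complex.I_sq

lemma integral_conj' {f : ℝ → ℂ} {a b : ℝ} :
    ∫ x in a..b, (starRingEnd ℂ) (f x) = (starRingEnd ℂ) (∫ x in a..b, f x) := by
  simp [intervalIntegral, ← integral_conj, _root_.map_sub]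

section core

variable {n : ℕ} {B : ℂ → ℂ} {r : ℝ} (u d : Fin n → ℂ)

/-- reproducing sum identity -/
lemma repro_sum (hr : 0 < r) {h : ℂ → ℂ} (hd : DiffContOnCl ℂ h (ball (0:ℂ) r))
    (hc : Continuous fun θ : ℝ => h (circleMap 0 r θ))
    (hu : ∀ i, ‖u i‖ < r) (e : Fin n → ℂ) :
    ∫ θ in (0:ℝ)..(2*π), h (circleMap 0 r θ) *
      (starRingEnd ℂ) (∑ j, (starRingEnd ℂ) (e j) *
        ((r:ℂ)^2 / ((r:ℂ)^2 - (starRingEnd ℂ) (u j) * circleMap 0 r θ)))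
      = 2 * π * ∑ j, e j * h (u j) := by
  have hcont : ∀ j : Fin n, Continuous (fun θ : ℝ => h (circleMap 0 r θ) *
      ((e j) * (starRingEnd ℂ) ((r:ℂ)^2 / ((r:ℂ)^2 - (starRingEnd ℂ) (u j) * circleMap 0 r θ)))) := by
    intro j
    apply hc.mul
    apply continuous_const.mul
    apply Complex.continuous_conj.comp
    apply Continuous.div continuous_const
    · exact continuous_const.sub (continuous_const.mul (continuous_circleMap 0 r))
    · intro θ
      intro h0
      have h1 : ‖((starRingEnd ℂ) (u j) * circleMap 0 r θ)‖ = ‖(u j)‖ * r := by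
        rw [norm_mul, Complex.norm_conj, norm_circleMap_zero, abs_of_pos hr]
      have h2 : (r:ℝ)^2 = ‖(u j)‖ * r := by
        have h3 := sub_eq_zero.mp h0
        calc (r:ℝ)^2 = ‖((r:ℂ)^2)‖ := by
              rw [norm_pow, Complex.norm_real, Real.norm_eq_abs, abs_of_pos hr]
          _ = _ := by rw [h3, h1]
      have h4 := hu j
      nlinarith [norm_nonneg (u j)]
  calc ∫ θ in (0:ℝ)..(2*π), h (circleMap 0 r θ) *
      (starRingEnd ℂ) (∑ j, (starRingEnd ℂ) (e j) *
        ((r:ℂ)^2 / ((r:ℂ)^2 - (starRingEnd ℂ) (u j) * circleMap 0 r θ)))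
      = ∫ θ in (0:ℝ)..(2*π), ∑ j, h (circleMap 0 r θ) *
        ((e j) * (starRingEnd ℂ) ((r:ℂ)^2 / ((r:ℂ)^2 - (starRingEnd ℂ) (u j) * circleMap 0 r θ))) := by
        apply intervalIntegral.integral_congr
        intro θ _
        simp only [_root_.map_sum, _root_.map_mul, Complex.conj_conj, Finset.mul_sum]
    _ = ∑ j, ∫ θ in (0:ℝ)..(2*π), h (circleMap 0 r θ) *
        ((e j) * (starRingEnd ℂ) ((r:ℂ)^2 / ((r:ℂ)^2 - (starRingEnd ℂ) (u j) * circleMap 0 r θ))) := by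
        apply intervalIntegral.integral_finset_sum
        intro j _
        exact (hcont j).intervalIntegrable _ _
    _ = ∑ j, e j * (2 * π * h (u j)) := by
        congr 1
        ext j
        have : ∀ θ:ℝ, h (circleMap 0 r θ) *
            ((e j) * (starRingEnd ℂ) ((r:ℂ)^2 / ((r:ℂ)^2 - (starRingEnd ℂ) (u j) * circleMap 0 r θ)))
            = e j * (h (circleMap 0 r θ) *
            (starRingEnd ℂ) ((r:ℂ)^2 / ((r:ℂ)^2 - (starRingEnd ℂ) (u j) * circleMap 0 r θ))) := by
          intro θ; ring
        rw [intervalIntegral.integral_congr (fun θ _ => this θ),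
          intervalIntegral.integral_const_mul, repro hr hd (hu j)]
    _ = 2 * π * ∑ j, e j * h (u j) := by rw [Finset.mul_sum]; congr 1; ext j; ring

lemma core_disk (hBd : DifferentiableOn ℂ B (ball (0:ℂ) 1))
    (hB1 : ∀ z ∈ ball (0:ℂ) 1, ‖B z‖ ≤ 1)
    (hr0 : 0 < r) (hr1 : r < 1) (hu : ∀ i, ‖u i‖ < r) :
    0 ≤ (∑ i, ∑ j, d i * (starRingEnd ℂ) (d j) * (1 - B (u i) * (starRingEnd ℂ) (B (u j))) *
        ((r:ℂ)^2 / ((r:ℂ)^2 - u i * (starRingEnd ℂ) (u j)))).re := by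
  classical
  set c := starRingEnd ℂ
  -- kernels
  set kf : Fin n → ℂ → ℂ := fun i z => (r:ℂ)^2 / ((r:ℂ)^2 - c (u i) * z) with hkf
  set K : ℂ → ℂ := fun z => ∑ i, c (d i) * kf i z with hK
  set M : ℂ → ℂ := fun z => ∑ i, c (d i * B (u i)) * kf i z with hM
  have hball : closedBall (0:ℂ) r ⊆ ball (0:ℂ) 1 := closedBall_subset_ball hr1
  have hden : ∀ i : Fin n, ∀ z ∈ closedBall (0:ℂ) r, (r:ℂ)^2 - c (u i) * z ≠ 0 := by
    intro i z hz h0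
    have hzn : ‖z‖ ≤ r := by
      rw [mem_closedBall, Complex.dist_eq, sub_zero] at hz; exact hz
    have h1 : ‖(c (u i) * z)‖ ≤ ‖(u i)‖ * r := by
      rw [norm_mul, Complex.norm_conj]
      exact mul_le_mul_of_nonneg_left hzn (norm_nonneg _)
    have h2 : (r:ℝ)^2 ≤ ‖(u i)‖ * r := by
      have h3 := sub_eq_zero.mp h0
      calc (r:ℝ)^2 = ‖((r:ℂ)^2)‖ := by
            rw [norm_pow, Complex.norm_real, Real.norm_eq_abs, abs_of_pos hr0]
        _ ≤ _ := by rw [h3]; exact h1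
    have h4 := hu i
    nlinarith [norm_nonneg (u i)]
  have hkfd : ∀ i : Fin n, DifferentiableOn ℂ (kf i) (closedBall (0:ℂ) r) := by
    intro i
    apply DifferentiableOn.div (differentiableOn_const _)
    · exact (differentiableOn_const _).sub ((differentiableOn_const _).mul differentiableOn_id)
    · exact hden i
  have hKd : DifferentiableOn ℂ K (closedBall (0:ℂ) r) := by
    apply DifferentiableOn.fun_sum
    intro i _
    exact (differentiableOn_const _).mul (hkfd i)
  have hMd : DifferentiableOn ℂ M (closedBall (0:ℂ) r) := by
    apply DifferentiableOn.fun_sum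
    intro i _
    exact (differentiableOn_const _).mul (hkfd i)
  have hBd' : DifferentiableOn ℂ B (closedBall (0:ℂ) r) := hBd.mono hball
  have toCl : ∀ {g : ℂ → ℂ}, DifferentiableOn ℂ g (closedBall (0:ℂ) r) →
      DiffContOnCl ℂ g (ball (0:ℂ) r) := by
    intro g hg
    apply DifferentiableOn.diffContOnCl
    rwa [closure_ball (0:ℂ) hr0.ne']
  have hγmem : ∀ θ : ℝ, circleMap 0 r θ ∈ closedBall (0:ℂ) r := by
    intro θ
    rw [mem_closedBall, Complex.dist_eq, sub_zero, norm_circleMap_zero, abs_of_pos hr0]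
  have hcK : Continuous fun θ : ℝ => K (circleMap 0 r θ) :=
    (toCl hKd).continuousOn_ball.comp_continuous (continuous_circleMap 0 r)
      (fun θ => by rw [← closure_ball (0:ℂ) hr0.ne'] at hγmem ⊢; exact hγmem θ)
  have hcM : Continuous fun θ : ℝ => M (circleMap 0 r θ) :=
    (toCl hMd).continuousOn_ball.comp_continuous (continuous_circleMap 0 r)
      (fun θ => by rw [← closure_ball (0:ℂ) hr0.ne'] at hγmem ⊢; exact hγmem θ)
  have hcB : Continuous fun θ : ℝ => B (circleMap 0 r θ) :=
    hBd'.continuousOn.comp_continuous (continuous_circleMap 0 r) hγmem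
  -- reproducing identities
  have E1 : ∫ θ in (0:ℝ)..(2*π), K (circleMap 0 r θ) * c (K (circleMap 0 r θ))
      = 2 * π * ∑ j, d j * K (u j) := by
    have := repro_sum u hr0 (toCl hKd) hcK hu d
    simpa only [hK, hkf, Complex.conj_conj] using this
  have E2 : ∫ θ in (0:ℝ)..(2*π), M (circleMap 0 r θ) * c (M (circleMap 0 r θ))
      = 2 * π * ∑ j, (d j * B (u j)) * M (u j) := by
    have := repro_sum u hr0 (toCl hMd) hcM hu (fun j => d j * B (u j))
    simpa only [hM, hkf] using this
  have E3 : ∫ θ in (0:ℝ)..(2*π), (B (circleMap 0 r θ) * M (circleMap 0 r θ)) * c (K (circleMap 0 r θ))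
      = 2 * π * ∑ j, d j * (B (u j) * M (u j)) := by
    have hBM : DiffContOnCl ℂ (fun z => B z * M z) (ball (0:ℂ) r) := toCl (hBd'.mul hMd)
    have := repro_sum u hr0 hBM (hcB.mul hcM) hu d
    simpa only [hK, hkf] using this
  -- real integrals
  set IK : ℝ := ∫ θ in (0:ℝ)..(2*π), normSq (K (circleMap 0 r θ)) with hIK
  set IM : ℝ := ∫ θ in (0:ℝ)..(2*π), normSq (M (circleMap 0 r θ)) with hIM
  set IBM : ℝ := ∫ θ in (0:ℝ)..(2*π), normSq (B (circleMap 0 r θ) * M (circleMap 0 r θ)) with hIBM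
  set IN : ℝ := ∫ θ in (0:ℝ)..(2*π), normSq (B (circleMap 0 r θ) * M (circleMap 0 r θ) - K (circleMap 0 r θ)) with hIN
  have hcnK : Continuous fun θ : ℝ => normSq (K (circleMap 0 r θ)) :=
    Complex.continuous_normSq.comp hcK
  have hcnM : Continuous fun θ : ℝ => normSq (M (circleMap 0 r θ)) :=
    Complex.continuous_normSq.comp hcM
  have hcnBM : Continuous fun θ : ℝ => normSq (B (circleMap 0 r θ) * M (circleMap 0 r θ)) :=
    Complex.continuous_normSq.comp (hcB.mul hcM)
  have hcnN : Continuous fun θ : ℝ => normSq (B (circleMap 0 r θ) * M (circleMap 0 r θ) - K (circleMap 0 r θ)) :=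
    Complex.continuous_normSq.comp ((hcB.mul hcM).sub hcK)
  have hcc : ∀ z : ℂ, c (c z) = z := fun z => Complex.conj_conj z
  have R1 : ((IK:ℝ):ℂ) = 2 * π * ∑ j, d j * K (u j) := by
    rw [← E1, hIK, ← intervalIntegral.integral_ofReal]
    apply intervalIntegral.integral_congr
    intro θ _
    exact (Complex.mul_conj _).symm
  have R2 : ((IM:ℝ):ℂ) = 2 * π * ∑ j, (d j * B (u j)) * M (u j) := by
    rw [← E2, hIM, ← intervalIntegral.integral_ofReal]
    apply intervalIntegral.integral_congr
    intro θ _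
    exact (Complex.mul_conj _).symm
  have R3 : (∫ θ in (0:ℝ)..(2*π), (B (circleMap 0 r θ) * M (circleMap 0 r θ)) * c (K (circleMap 0 r θ)))
      = ((IM:ℝ):ℂ) := by
    rw [E3, R2]
    congr 1
    exact Finset.sum_congr rfl fun j _ => by ring
  have R4 : (∫ θ in (0:ℝ)..(2*π), K (circleMap 0 r θ) * c (B (circleMap 0 r θ) * M (circleMap 0 r θ)))
      = ((IM:ℝ):ℂ) := by
    have hpt : ∀ θ:ℝ, K (circleMap 0 r θ) * c (B (circleMap 0 r θ) * M (circleMap 0 r θ))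
        = c ((B (circleMap 0 r θ) * M (circleMap 0 r θ)) * c (K (circleMap 0 r θ))) := by
      intro θ
      simp only [_root_.map_mul, hcc]
      ring
    rw [intervalIntegral.integral_congr (fun θ _ => hpt θ), integral_conj', R3, Complex.conj_ofReal]
  have hint1 : IntervalIntegrable (fun θ : ℝ => (B (circleMap 0 r θ) * M (circleMap 0 r θ)) * c (K (circleMap 0 r θ))) MeasureTheory.volume 0 (2*π) :=
    (((hcB.mul hcM)).mul (Complex.continuous_conj.comp hcK)).intervalIntegrable _ _
  have hint2 : IntervalIntegrable (fun θ : ℝ => K (circleMap 0 r θ) * c (B (circleMap 0 r θ) * M (circleMap 0 r θ))) MeasureTheory.volume 0 (2*π) :=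
    (hcK.mul (Complex.continuous_conj.comp (hcB.mul hcM))).intervalIntegrable _ _
  have pt : ∀ z w : ℂ, z * c w + w * c z = ((normSq z + normSq w - normSq (z - w) : ℝ) : ℂ) := by
    intro z w
    have h5 : w * c z = c (z * c w) := by simp only [_root_.map_mul, hcc]; ring
    rw [Complex.normSq_sub, h5, Complex.add_conj]
    push_cast
    ring
  have Rsum : ((2*IM:ℝ):ℂ) = ((IBM + IK - IN : ℝ):ℂ) := by
    have lhs : (∫ θ in (0:ℝ)..(2*π), ((B (circleMap 0 r θ) * M (circleMap 0 r θ)) * c (K (circleMap 0 r θ))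
        + K (circleMap 0 r θ) * c (B (circleMap 0 r θ) * M (circleMap 0 r θ)))) = ((2*IM:ℝ):ℂ) := by
      rw [intervalIntegral.integral_add hint1 hint2, R3, R4]
      push_cast
      ring
    have rhs : (∫ θ in (0:ℝ)..(2*π), ((B (circleMap 0 r θ) * M (circleMap 0 r θ)) * c (K (circleMap 0 r θ))
        + K (circleMap 0 r θ) * c (B (circleMap 0 r θ) * M (circleMap 0 r θ)))) = ((IBM + IK - IN : ℝ):ℂ) := by
      have hpt2 : ∀ θ : ℝ, (B (circleMap 0 r θ) * M (circleMap 0 r θ)) * c (K (circleMap 0 r θ))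
          + K (circleMap 0 r θ) * c (B (circleMap 0 r θ) * M (circleMap 0 r θ))
          = ((normSq (B (circleMap 0 r θ) * M (circleMap 0 r θ)) + normSq (K (circleMap 0 r θ))
              - normSq (B (circleMap 0 r θ) * M (circleMap 0 r θ) - K (circleMap 0 r θ)) : ℝ) : ℂ) :=
        fun θ => pt _ _
      rw [intervalIntegral.integral_congr (fun θ _ => hpt2 θ), intervalIntegral.integral_ofReal,
        intervalIntegral.integral_sub ((hcnBM.fun_add hcnK).intervalIntegrable _ _)
        (hcnN.intervalIntegrable _ _),
        intervalIntegral.integral_add (hcnBM.intervalIntegrable _ _) (hcnK.intervalIntegrable _ _)]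
    rw [← lhs, rhs]
  have key : 2*IM = IBM + IK - IN := by exact_mod_cast Rsum
  have hIN0 : 0 ≤ IN := by
    apply intervalIntegral.integral_nonneg (by positivity)
    intro θ _
    exact normSq_nonneg _
  have hIBM : IBM ≤ IM := by
    apply intervalIntegral.integral_mono_on (by positivity) (hcnBM.intervalIntegrable _ _)
      (hcnM.intervalIntegrable _ _)
    intro θ _
    rw [Complex.normSq_mul]
    have hmem1 : circleMap 0 r θ ∈ ball (0:ℂ) 1 := hball (hγmem θ)
    have hb : normSq (B (circleMap 0 r θ)) ≤ 1 := by
      rw [Complex.normSq_eq_norm_sq]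
      have := hB1 _ hmem1
      nlinarith [norm_nonneg (B (circleMap 0 r θ))]
    nlinarith [normSq_nonneg (M (circleMap 0 r θ))]
  have hIMK : IM ≤ IK := by linarith
  -- algebraic identification of the quadratic form
  have hSsplit : (∑ i, ∑ j, d i * c (d j) * (1 - B (u i) * c (B (u j))) *
        ((r:ℂ)^2 / ((r:ℂ)^2 - u i * c (u j))))
      = (∑ j, d j * K (u j)) - (∑ j, (d j * B (u j)) * M (u j)) := by
    simp only [hK, hM, hkf, Finset.mul_sum, ← Finset.sum_sub_distrib]
    apply Finset.sum_congr rfl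
    intro i _
    apply Finset.sum_congr rfl
    intro j _
    simp only [_root_.map_mul]
    ring
  have h1 : ((IK - IM : ℝ):ℂ) = ((2*π:ℝ):ℂ) * (∑ i, ∑ j, d i * c (d j) * (1 - B (u i) * c (B (u j))) *
        ((r:ℂ)^2 / ((r:ℂ)^2 - u i * c (u j)))) := by
    rw [hSsplit]
    push_cast
    rw [R1, R2]
    ring
  have h2 := congrArg Complex.re h1
  rw [Complex.ofReal_re, Complex.re_ofReal_mul] at h2
  by_contra hcon
  push_neg at hcon
  have : 2*π * (∑ i, ∑ j, d i * c (d j) * (1 - B (u i) * c (B (u j))) *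
        ((r:ℂ)^2 / ((r:ℂ)^2 - u i * c (u j)))).re < 0 :=
    mul_neg_of_pos_of_neg (by positivity) hcon
  linarith

lemma disk_kernel_psd (hBd : DifferentiableOn ℂ B (ball (0:ℂ) 1))
    (hB1 : ∀ z ∈ ball (0:ℂ) 1, ‖B z‖ ≤ 1) (hu : ∀ i, ‖u i‖ < 1) :
    0 ≤ (∑ i, ∑ j, d i * (starRingEnd ℂ) (d j) * (1 - B (u i) * (starRingEnd ℂ) (B (u j))) /
        (1 - u i * (starRingEnd ℂ) (u j))).re := by
  classical
  -- a radius R₀ < 1 dominating all the points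
  set S : ℝ := ((Finset.univ.sup fun i : Fin n => ‖u i‖₊ : NNReal) : ℝ) with hS
  have hS0 : 0 ≤ S := NNReal.coe_nonneg _
  have hSlt : S < 1 := by
    rw [hS]
    have : (Finset.univ.sup fun i : Fin n => ‖u i‖₊) < 1 := by
      apply Finset.sup_lt_iff (by norm_num : (⊥ : NNReal) < 1) |>.mpr
      intro i _
      have h7 := hu i
      rw [show (1 : NNReal) = ‖(1:ℂ)‖₊ by simp]
      exact_mod_cast h7
    exact_mod_cast this
  have hSle : ∀ i, ‖u i‖ ≤ S := by
    intro i
    have : ‖u i‖₊ ≤ Finset.univ.sup fun i : Fin n => ‖u i‖₊ :=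
      Finset.le_sup (f := fun i : Fin n => ‖u i‖₊) (Finset.mem_univ i)
    exact_mod_cast this
  set R₀ : ℝ := (S + 1)/2 with hR₀
  have hR₀0 : 0 < R₀ := by rw [hR₀]; linarith
  have hR₀1 : R₀ < 1 := by rw [hR₀]; linarith
  have hR₀S : S < R₀ := by rw [hR₀]; linarith
  -- nonvanishing at r = 1
  have hne : ∀ i j : Fin n, (1:ℂ) - u i * (starRingEnd ℂ) (u j) ≠ 0 := by
    intro i j h0
    have h1 : ‖u i * (starRingEnd ℂ) (u j)‖ < 1 := by
      rw [norm_mul, RCLike.norm_conj]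
      nlinarith [hu i, hu j, norm_nonneg (u i), norm_nonneg (u j)]
    rw [sub_eq_zero] at h0
    rw [← h0] at h1
    simp at h1
  -- the limit r → 1⁻
  have hlim : Tendsto (fun r : ℝ => (∑ i, ∑ j,
        d i * (starRingEnd ℂ) (d j) * (1 - B (u i) * (starRingEnd ℂ) (B (u j))) *
        ((r:ℂ)^2 / ((r:ℂ)^2 - u i * (starRingEnd ℂ) (u j)))).re)
      (nhdsWithin 1 (Iio 1)) (nhds ((∑ i, ∑ j,
        d i * (starRingEnd ℂ) (d j) * (1 - B (u i) * (starRingEnd ℂ) (B (u j))) /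
        (1 - u i * (starRingEnd ℂ) (u j))).re)) := by
    have hr : Tendsto (fun r : ℝ => ((r:ℂ))) (nhdsWithin 1 (Iio 1)) (nhds 1) := by
      have := Complex.continuous_ofReal.tendsto (1:ℝ)
      exact (this.mono_left nhdsWithin_le_nhds).congr (fun _ => rfl)
    have hbase : ∀ i j : Fin n, Tendsto (fun r : ℝ =>
        d i * (starRingEnd ℂ) (d j) * (1 - B (u i) * (starRingEnd ℂ) (B (u j))) *
        ((r:ℂ)^2 / ((r:ℂ)^2 - u i * (starRingEnd ℂ) (u j))))
        (nhdsWithin 1 (Iio 1)) (nhds (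
        d i * (starRingEnd ℂ) (d j) * (1 - B (u i) * (starRingEnd ℂ) (B (u j))) /
        (1 - u i * (starRingEnd ℂ) (u j)))) := by
      intro i j
      have h2 : Tendsto (fun r : ℝ => ((r:ℂ))^2) (nhdsWithin 1 (Iio 1)) (nhds 1) := by
        have := hr.pow 2
        simpa using this
      have h3 : Tendsto (fun r : ℝ => ((r:ℂ))^2 - u i * (starRingEnd ℂ) (u j))
          (nhdsWithin 1 (Iio 1)) (nhds (1 - u i * (starRingEnd ℂ) (u j))) :=
        h2.sub tendsto_const_nhds
      have h4 := (h2.div h3 (hne i j))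
      have h5 := (tendsto_const_nhds (x := d i * (starRingEnd ℂ) (d j) *
          (1 - B (u i) * (starRingEnd ℂ) (B (u j)))) (f := nhdsWithin (1:ℝ) (Iio 1))).mul h4
      have h6 : d i * (starRingEnd ℂ) (d j) * (1 - B (u i) * (starRingEnd ℂ) (B (u j))) *
          (1 / (1 - u i * (starRingEnd ℂ) (u j)))
          = d i * (starRingEnd ℂ) (d j) * (1 - B (u i) * (starRingEnd ℂ) (B (u j))) /
          (1 - u i * (starRingEnd ℂ) (u j)) := by
        rw [mul_one_div]
      rwa [h6] at h5
    have hsum : Tendsto (fun r : ℝ => ∑ i, ∑ j,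
        d i * (starRingEnd ℂ) (d j) * (1 - B (u i) * (starRingEnd ℂ) (B (u j))) *
        ((r:ℂ)^2 / ((r:ℂ)^2 - u i * (starRingEnd ℂ) (u j))))
        (nhdsWithin 1 (Iio 1)) (nhds (∑ i, ∑ j,
        d i * (starRingEnd ℂ) (d j) * (1 - B (u i) * (starRingEnd ℂ) (B (u j))) /
        (1 - u i * (starRingEnd ℂ) (u j)))) := by
      apply tendsto_finset_sum
      intro i _
      apply tendsto_finset_sum
      intro j _
      exact hbase i j
    exact (Complex.continuous_re.tendsto _).comp hsum
  apply ge_of_tendsto hlim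
  apply Filter.eventually_of_mem (Ioo_mem_nhdsLT_of_mem (by constructor <;> linarith : (1:ℝ) ∈ Set.Ioc R₀ 1))
  intro r hr
  exact core_disk u d hBd hB1 (lt_trans hR₀0 hr.1) hr.2
    (fun i => lt_trans (lt_of_le_of_lt (hSle i) hR₀S) hr.1)

end core

lemma im_ne_zero_ne {ζ : ℂ} (h : ζ.im ≠ 0) : ζ ≠ 0 := by
  intro h0; rw [h0] at h; simp at h

lemma add_I_ne {ζ : ℂ} (hζ : 0 ≤ ζ.im) : ζ + I ≠ 0 := by
  apply im_ne_zero_ne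
  simp only [Complex.add_im, Complex.I_im]
  linarith

lemma cayley_lt_one {ζ : ℂ} (hζ : 0 < ζ.im) : ‖(ζ - I)/(ζ + I)‖ < 1 := by
  rw [norm_div, div_lt_one]
  · have h1 : ‖ζ - I‖^2 < ‖ζ + I‖^2 := by
      rw [Complex.sq_norm, Complex.sq_norm]
      simp only [Complex.normSq_apply, Complex.sub_re, Complex.sub_im, Complex.add_re,
        Complex.add_im, Complex.I_re, Complex.I_im]
      nlinarith
    nlinarith [norm_nonneg (ζ - I), norm_nonneg (ζ + I)]
  · rw [norm_pos_iff]
    exact add_I_ne hζ.le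

lemma cayley_le_one {ζ : ℂ} (hζ : 0 ≤ ζ.im) : ‖(ζ - I)/(ζ + I)‖ ≤ 1 := by
  rw [norm_div]
  rcases eq_or_ne (ζ + I) 0 with h0 | h0
  · rw [h0]; simp
  · rw [div_le_one (by rwa [norm_pos_iff])]
    have h1 : ‖ζ - I‖^2 ≤ ‖ζ + I‖^2 := by
      rw [Complex.sq_norm, Complex.sq_norm]
      simp only [Complex.normSq_apply, Complex.sub_re, Complex.sub_im, Complex.add_re,
        Complex.add_im, Complex.I_re, Complex.I_im]
      nlinarith
    nlinarith [norm_nonneg (ζ - I), norm_nonneg (ζ + I)]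

lemma inv_cayley_im {v : ℂ} (hv : ‖v‖ < 1) : 0 < (I * (1 + v) / (1 - v)).im := by
  have h1 : (1:ℂ) - v ≠ 0 := by
    intro h0
    rw [sub_eq_zero] at h0
    rw [← h0] at hv
    simp at hv
  have h2 : 0 < normSq (1 - v) := by
    rwa [normSq_pos]
  rw [Complex.div_im]
  have h3 : (I * (1 + v)).im = 1 + v.re := by
    simp [Complex.mul_im]
  have h4 : (I * (1 + v)).re = -v.im := by
    simp [Complex.mul_re]
  rw [h3, h4]
  have h5 : normSq v < 1 := by
    have := hv
    rw [← Complex.sq_norm]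
    nlinarith [norm_nonneg v]
  have h6 : (1 + v.re) * (1 - v).re - -v.im * (1 - v).im = 1 - normSq v := by
    simp only [Complex.sub_re, Complex.sub_im, Complex.one_re, Complex.one_im,
      Complex.normSq_apply]
    ring
  rw [div_sub_div_same, h6]
  exact div_pos (by linarith) h2

lemma inv_cayley_fixed {ζ : ℂ} (hζ : 0 < ζ.im) :
    I * (1 + (ζ - I)/(ζ + I)) / (1 - (ζ - I)/(ζ + I)) = ζ := by
  have h0 : ζ + I ≠ 0 := add_I_ne hζ.le
  have h1 : (1:ℂ) - (ζ - I)/(ζ + I) ≠ 0 := by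
    intro h2
    rw [sub_eq_zero] at h2
    have := cayley_lt_one hζ
    rw [← h2] at this
    simp at this
  rw [div_eq_iff h1]
  field_simp
  ring

lemma one_sub_cayley (a b : ℂ) (ha : a + I ≠ 0) (hb : b - I ≠ 0) :
    1 - (a - I)/(a + I) * ((b + I)/(b - I)) = (-2*I) * (a - b) / ((a + I) * (b - I)) := by
  field_simp
  ring

lemma combine_frac (c1 c2 A Bc Z W : ℂ) (hA : A + I ≠ 0) (hB : Bc - I ≠ 0) (hZ : Z + I ≠ 0)
    (hW : W - I ≠ 0) (hZW : Z - W ≠ 0) :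
    c1 * ((A+I)/(Z+I)) * (c2 * ((Bc-I)/(W-I))) * ((-2*I)*(A-Bc)/((A+I)*(Bc-I))) /
      ((-2*I)*(Z-W)/((Z+I)*(W-I))) = c1 * c2 * ((A - Bc)/(Z - W)) := by
  have hI : (-2*I : ℂ) ≠ 0 := by
    exact mul_ne_zero (by norm_num) Complex.I_ne_zero
  have hN : (-2*I)*(Z-W) ≠ 0 := mul_ne_zero hI hZW
  field_simp

set_option maxHeartbeats 2000000 in
lemma halfplane_form_nonneg {n : ℕ} (f : ℂ → ℂ)
    (hf : ∀ z : ℂ, 0 < z.im → DifferentiableAt ℂ f z ∧ 0 ≤ (f z).im)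
    (z : Fin n → ℂ) (hz : ∀ i, 0 < (z i).im) (cv : Fin n → ℂ) :
    0 ≤ (∑ i, ∑ j, cv i * (starRingEnd ℂ) (cv j) *
        ((f (z i) - (starRingEnd ℂ) (f (z j))) / (z i - (starRingEnd ℂ) (z j)))).re := by
  classical
  set φ : ℂ → ℂ := fun v => I * (1 + v) / (1 - v) with hφ
  set B : ℂ → ℂ := fun v => (f (φ v) - I) / (f (φ v) + I) with hB
  set u : Fin n → ℂ := fun i => (z i - I)/(z i + I) with hu
  set d : Fin n → ℂ := fun i => cv i * ((f (z i) + I)/(z i + I)) with hd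
  have hφim : ∀ v ∈ ball (0:ℂ) 1, 0 < (φ v).im := by
    intro v hv
    exact inv_cayley_im (by rwa [mem_ball_zero_iff] at hv)
  have hBd : DifferentiableOn ℂ B (ball (0:ℂ) 1) := by
    intro v hv
    apply DifferentiableAt.differentiableWithinAt
    have hv1 : ‖v‖ < 1 := by rwa [mem_ball_zero_iff] at hv
    have hden : (1:ℂ) - v ≠ 0 := by
      intro h0; rw [sub_eq_zero] at h0; rw [← h0] at hv1; simp at hv1
    have hφd : DifferentiableAt ℂ φ v := by
      apply DifferentiableAt.div
      · exact (differentiableAt_const _).mul ((differentiableAt_const _).add differentiableAt_id)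
      · exact (differentiableAt_const _).sub differentiableAt_id
      · exact hden
    have hfd : DifferentiableAt ℂ f (φ v) := (hf _ (hφim v hv)).1
    have hcomp : DifferentiableAt ℂ (fun w => f (φ w)) v := hfd.comp v hφd
    apply DifferentiableAt.div
    · exact hcomp.sub (differentiableAt_const _)
    · exact hcomp.add (differentiableAt_const _)
    · exact add_I_ne (hf _ (hφim v hv)).2
  have hB1 : ∀ v ∈ ball (0:ℂ) 1, ‖B v‖ ≤ 1 := by
    intro v hv
    exact cayley_le_one (hf _ (hφim v hv)).2
  have hu1 : ∀ i, ‖u i‖ < 1 := fun i => cayley_lt_one (hz i)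
  have hBu : ∀ i, B (u i) = (f (z i) - I)/(f (z i) + I) := by
    intro i
    have h1 := inv_cayley_fixed (hz i)
    simp only [hB, hφ, hu]
    rw [h1]
  have key : ∀ i j, cv i * (starRingEnd ℂ) (cv j) *
      ((f (z i) - (starRingEnd ℂ) (f (z j))) / (z i - (starRingEnd ℂ) (z j)))
      = d i * (starRingEnd ℂ) (d j) * (1 - B (u i) * (starRingEnd ℂ) (B (u j))) /
        (1 - u i * (starRingEnd ℂ) (u j)) := by
    intro i j
    have hzI : z i + I ≠ 0 := add_I_ne (hz i).le
    have hzJ : z j + I ≠ 0 := add_I_ne (hz j).le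
    have hzcJ : (starRingEnd ℂ) (z j) - I ≠ 0 := by
      intro h0
      apply hzJ
      have h1 := congrArg (starRingEnd ℂ) h0
      simpa [_root_.map_sub, Complex.conj_conj, Complex.conj_I, sub_eq_zero, eq_comm,
        sub_eq_iff_eq_add] using h1
    have hfzI : f (z i) + I ≠ 0 := add_I_ne (hf _ (hz i)).2
    have hfzJ : f (z j) + I ≠ 0 := add_I_ne (hf _ (hz j)).2
    have hfcJ : (starRingEnd ℂ) (f (z j)) - I ≠ 0 := by
      intro h0
      apply hfzJ
      have h1 := congrArg (starRingEnd ℂ) h0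
      simpa [_root_.map_sub, Complex.conj_conj, Complex.conj_I, sub_eq_zero, eq_comm,
        sub_eq_iff_eq_add] using h1
    have hzij : z i - (starRingEnd ℂ) (z j) ≠ 0 := by
      apply im_ne_zero_ne
      simp only [Complex.sub_im, Complex.conj_im]
      have := hz i; have := hz j
      intro h0
      linarith
    have huij : (1:ℂ) - u i * (starRingEnd ℂ) (u j) ≠ 0 := by
      intro h0
      have h1 : ‖u i * (starRingEnd ℂ) (u j)‖ < 1 := by
        rw [norm_mul, RCLike.norm_conj]
        nlinarith [hu1 i, hu1 j, norm_nonneg (u i), norm_nonneg (u j)]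
      rw [sub_eq_zero] at h0
      rw [← h0] at h1
      simp at h1
    rw [hBu i, hBu j]
    simp only [hu, hd, _root_.map_div₀, _root_.map_sub, _root_.map_add, _root_.map_mul, Complex.conj_I, Complex.conj_conj,
      ← sub_eq_add_neg, sub_neg_eq_add]
    rw [one_sub_cayley (f (z i)) ((starRingEnd ℂ) (f (z j))) hfzI hfcJ,
      one_sub_cayley (z i) ((starRingEnd ℂ) (z j)) hzI hzcJ]
    exact (combine_frac (cv i) ((starRingEnd ℂ) (cv j)) (f (z i)) ((starRingEnd ℂ) (f (z j)))
      (z i) ((starRingEnd ℂ) (z j)) hfzI hfcJ hzI hzcJ hzij).symm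
  calc (0:ℝ) ≤ (∑ i, ∑ j, d i * (starRingEnd ℂ) (d j) *
      (1 - B (u i) * (starRingEnd ℂ) (B (u j))) / (1 - u i * (starRingEnd ℂ) (u j))).re :=
      disk_kernel_psd u d hBd hB1 hu1
    _ = _ := by
      congr 1
      apply Finset.sum_congr rfl
      intro i _
      apply Finset.sum_congr rfl
      intro j _
      exact (key i j).symm

lemma slope_im_tendsto (f : ℂ → ℂ) {x w : ℝ} (hA : AnalyticAt ℂ f ((x:ℝ):ℂ))
    (hval : f ((x:ℝ):ℂ) = ((w:ℝ):ℂ)) :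
    Tendsto (fun ε : ℝ => (f (((x:ℝ):ℂ) + ε * I)).im / ε) (nhdsWithin 0 (Ioi 0))
      (nhds ((deriv f ((x:ℝ):ℂ)).re)) := by
  have hD : HasDerivAt f (deriv f ((x:ℝ):ℂ)) ((x:ℝ):ℂ) :=
    hA.differentiableAt.hasDerivAt
  have hslope := hasDerivAt_iff_tendsto_slope.mp hD
  set g : ℝ → ℂ := fun ε => ((x:ℝ):ℂ) + ε * I with hg
  have hg1 : Tendsto g (nhdsWithin 0 (Ioi 0)) (nhds ((x:ℝ):ℂ)) := by
    have hc : Continuous g := by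
      apply continuous_const.add
      exact (Complex.continuous_ofReal).mul continuous_const
    have h0 := (hc.tendsto 0).mono_left (nhdsWithin_le_nhds (s := Ioi (0:ℝ)))
    simpa [hg] using h0
  have hg2 : ∀ᶠ ε in nhdsWithin (0:ℝ) (Ioi 0), g ε ∈ ({((x:ℝ):ℂ)}ᶜ : Set ℂ) := by
    filter_upwards [self_mem_nhdsWithin] with ε hε
    simp only [Set.mem_compl_iff, Set.mem_singleton_iff, hg]
    intro h0
    have h1 : (((x:ℝ):ℂ) + ↑ε * I).im = (((x:ℝ):ℂ)).im := by rw [h0]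
    simp only [Complex.add_im, Complex.ofReal_im, Complex.mul_im, Complex.ofReal_re,
      Complex.I_im, Complex.I_re] at h1
    have hε' : (0:ℝ) < ε := hε
    simp at h1
    linarith
  have hgt : Tendsto g (nhdsWithin 0 (Ioi 0)) (nhdsWithin ((x:ℝ):ℂ) {((x:ℝ):ℂ)}ᶜ) :=
    tendsto_nhdsWithin_of_tendsto_nhds_of_eventually_within g hg1 hg2
  have T := hslope.comp hgt
  have T2 := (Complex.continuous_re.tendsto _).comp T
  apply T2.congr'
  filter_upwards [self_mem_nhdsWithin] with ε hε
  have hε' : (0:ℝ) < ε := hε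
  have hεC : (ε:ℂ) ≠ 0 := by exact_mod_cast hε'.ne'
  simp only [Function.comp_apply]
  rw [slope_def_field, hg]
  have h3 : ((x:ℝ):ℂ) + ↑ε * I - ((x:ℝ):ℂ) = ↑ε * I := by ring
  rw [h3, hval]
  set ζ := f (((x:ℝ):ℂ) + ↑ε * I)
  rw [Complex.div_re]
  simp only [Complex.mul_re, Complex.mul_im, Complex.ofReal_re, Complex.ofReal_im,
    Complex.I_re, Complex.I_im, Complex.sub_re, Complex.sub_im, Complex.normSq_apply]
  field_simp
  ring

/-- necessity of positivity. If the Pick function `f` extends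
analytically to distinct real points `x₁, …, xₙ` with real values `w_j` and
derivatives `f'(x_j)`, then the matrix with off-diagonal entries
`(w_i - w_j)/(x_i - x_j)` and diagonal entries `f'(x_j)` is positive
semidefinite. -/
theorem pick_matrix_of_solution_psd {n : ℕ}
    (f : ℂ → ℂ)
    (hf : ∀ z : ℂ, 0 < z.im → DifferentiableAt ℂ f z ∧ 0 ≤ (f z).im)
    (x : Fin n → ℝ) (hinj : Function.Injective x) (w : Fin n → ℝ)
    (hA : ∀ j, AnalyticAt ℂ f ((x j : ℝ) : ℂ))
    (hreal : ∀ j, ∀ᶠ t : ℝ in nhds (x j), (f (t : ℂ)).im = 0)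
    (hval : ∀ j, f ((x j : ℝ) : ℂ) = ((w j : ℝ) : ℂ))
    (M' : Matrix (Fin n) (Fin n) ℝ)
    (hM' : ∀ i j, M' i j =
      if i = j then (deriv f ((x j : ℝ) : ℂ)).re
      else (w i - w j) / (x i - x j)) :
    M'.PosSemidef := by
  classical
  constructor
  · -- symmetry
    ext i j
    rw [Matrix.conjTranspose_apply, hM' i j, hM' j i, star_trivial]
    by_cases h : i = j
    · subst h; simp
    · rw [if_neg h, if_neg (fun h' => h h'.symm)]
      rw [show w j - w i = -(w i - w j) by ring, show x j - x i = -(x i - x j) by ring,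
        neg_div_neg_eq]
  · intro v
    -- the path ε ↦ x k + ε i
    have hpath : ∀ k : Fin n, Tendsto (fun ε : ℝ => ((x k : ℝ):ℂ) + ↑ε * I)
        (nhdsWithin 0 (Ioi 0)) (nhds ((x k : ℝ):ℂ)) := by
      intro k
      have hc : Continuous fun ε : ℝ => ((x k : ℝ):ℂ) + ↑ε * I :=
        continuous_const.add ((Complex.continuous_ofReal).mul continuous_const)
      have h0 := (hc.tendsto 0).mono_left (nhdsWithin_le_nhds (s := Ioi (0:ℝ)))
      simpa using h0
    have hzc : ∀ (k : Fin n) (ε : ℝ), (starRingEnd ℂ) (((x k : ℝ):ℂ) + ↑ε * I)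
        = ((x k : ℝ):ℂ) - ↑ε * I := by
      intro k ε
      simp only [_root_.map_add, _root_.map_mul, Complex.conj_ofReal, Complex.conj_I]
      ring
    -- termwise limits
    have hterm : ∀ i j : Fin n, Tendsto (fun ε : ℝ =>
        (((v i : ℝ):ℂ) * (starRingEnd ℂ) ((v j : ℝ):ℂ) *
          ((f (((x i : ℝ):ℂ) + ↑ε * I) - (starRingEnd ℂ) (f (((x j : ℝ):ℂ) + ↑ε * I))) /
            ((((x i : ℝ):ℂ) + ↑ε * I) - (starRingEnd ℂ) (((x j : ℝ):ℂ) + ↑ε * I)))).re)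
        (nhdsWithin 0 (Ioi 0)) (nhds (v i * v j * M' i j)) := by
      intro i j
      by_cases hij : i = j
      · -- diagonal term
        subst hij
        have hTT : Tendsto (fun ε : ℝ => v i * v i * ((f (((x i : ℝ):ℂ) + ↑ε * I)).im / ε))
            (nhdsWithin 0 (Ioi 0)) (nhds (v i * v i * (deriv f ((x i : ℝ):ℂ)).re)) :=
          tendsto_const_nhds.mul (slope_im_tendsto f (hA i) (hval i))
        rw [show v i * v i * M' i i = v i * v i * (deriv f ((x i : ℝ):ℂ)).re by
          rw [hM', if_pos rfl]]
        apply hTT.congr'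
        filter_upwards [self_mem_nhdsWithin] with ε hε
        have hε' : (0:ℝ) < ε := hε
        have hεC : (ε:ℂ) ≠ 0 := by exact_mod_cast hε'.ne'
        set ζ := f (((x i : ℝ):ℂ) + ↑ε * I) with hζ
        rw [hzc]
        have hd : (((x i : ℝ):ℂ) + ↑ε * I) - (((x i : ℝ):ℂ) - ↑ε * I) = 2 * ↑ε * I := by ring
        rw [hd, Complex.sub_conj]
        have hq : ((2 * ζ.im : ℝ):ℂ) * I / (2 * ↑ε * I) = ((ζ.im / ε : ℝ):ℂ) := by
          rw [div_eq_iff (by simp [hεC, Complex.I_ne_zero] : (2:ℂ) * ↑ε * I ≠ 0)]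
          push_cast
          field_simp
        rw [hq, Complex.conj_ofReal]
        simp only [← Complex.ofReal_mul, Complex.ofReal_re]
      · -- off-diagonal term
        have hxij : ((x i : ℝ):ℂ) - ((x j : ℝ):ℂ) ≠ 0 := by
          rw [sub_ne_zero]
          exact_mod_cast fun h => hij (hinj h)
        have hfi : Tendsto (fun ε : ℝ => f (((x i : ℝ):ℂ) + ↑ε * I))
            (nhdsWithin 0 (Ioi 0)) (nhds (f ((x i : ℝ):ℂ))) :=
          ((hA i).continuousAt.tendsto).comp (hpath i)
        have hfj : Tendsto (fun ε : ℝ => (starRingEnd ℂ) (f (((x j : ℝ):ℂ) + ↑ε * I)))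
            (nhdsWithin 0 (Ioi 0)) (nhds ((starRingEnd ℂ) (f ((x j : ℝ):ℂ)))) :=
          (Complex.continuous_conj.tendsto _).comp (((hA j).continuousAt.tendsto).comp (hpath j))
        have hcj : Tendsto (fun ε : ℝ => (starRingEnd ℂ) (((x j : ℝ):ℂ) + ↑ε * I))
            (nhdsWithin 0 (Ioi 0)) (nhds ((starRingEnd ℂ) ((x j : ℝ):ℂ))) :=
          (Complex.continuous_conj.tendsto _).comp (hpath j)
        have hden : Tendsto (fun ε : ℝ => (((x i : ℝ):ℂ) + ↑ε * I) - (starRingEnd ℂ) (((x j : ℝ):ℂ) + ↑ε * I))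
            (nhdsWithin 0 (Ioi 0)) (nhds (((x i : ℝ):ℂ) - ((x j : ℝ):ℂ))) := by
          have := (hpath i).sub hcj
          simpa [Complex.conj_ofReal] using this
        have hnum : Tendsto (fun ε : ℝ => f (((x i : ℝ):ℂ) + ↑ε * I) - (starRingEnd ℂ) (f (((x j : ℝ):ℂ) + ↑ε * I)))
            (nhdsWithin 0 (Ioi 0)) (nhds (((w i : ℝ):ℂ) - ((w j : ℝ):ℂ))) := by
          have := hfi.sub hfj
          rw [hval i, hval j, Complex.conj_ofReal] at this
          exact this
        have hT : Tendsto (fun ε : ℝ =>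
            ((v i : ℝ):ℂ) * (starRingEnd ℂ) ((v j : ℝ):ℂ) *
            ((f (((x i : ℝ):ℂ) + ↑ε * I) - (starRingEnd ℂ) (f (((x j : ℝ):ℂ) + ↑ε * I))) /
              ((((x i : ℝ):ℂ) + ↑ε * I) - (starRingEnd ℂ) (((x j : ℝ):ℂ) + ↑ε * I))))
            (nhdsWithin 0 (Ioi 0)) (nhds (((v i : ℝ):ℂ) * (starRingEnd ℂ) ((v j : ℝ):ℂ) *
            ((((w i : ℝ):ℂ) - ((w j : ℝ):ℂ)) / (((x i : ℝ):ℂ) - ((x j : ℝ):ℂ))))) :=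
          tendsto_const_nhds.mul (hnum.div hden hxij)
        have hT2 := (Complex.continuous_re.tendsto _).comp hT
        have hvalre : (((v i : ℝ):ℂ) * (starRingEnd ℂ) ((v j : ℝ):ℂ) *
            ((((w i : ℝ):ℂ) - ((w j : ℝ):ℂ)) / (((x i : ℝ):ℂ) - ((x j : ℝ):ℂ)))).re
            = v i * v j * M' i j := by
          rw [hM', if_neg hij, Complex.conj_ofReal]
          rw [show ((v i : ℝ):ℂ) * ((v j : ℝ):ℂ) *
              ((((w i : ℝ):ℂ) - ((w j : ℝ):ℂ)) / (((x i : ℝ):ℂ) - ((x j : ℝ):ℂ)))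
              = ((v i * v j * ((w i - w j)/(x i - x j)) : ℝ) : ℂ) by push_cast; ring]
          rw [Complex.ofReal_re]
        rw [← hvalre]
        exact hT2
    -- the quadratic form as a limit
    have hsum : Tendsto (fun ε : ℝ => ∑ i, ∑ j,
        (((v i : ℝ):ℂ) * (starRingEnd ℂ) ((v j : ℝ):ℂ) *
          ((f (((x i : ℝ):ℂ) + ↑ε * I) - (starRingEnd ℂ) (f (((x j : ℝ):ℂ) + ↑ε * I))) /
            ((((x i : ℝ):ℂ) + ↑ε * I) - (starRingEnd ℂ) (((x j : ℝ):ℂ) + ↑ε * I)))).re)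
        (nhdsWithin 0 (Ioi 0)) (nhds (∑ i, ∑ j, v i * v j * M' i j)) := by
      apply tendsto_finset_sum
      intro i _
      apply tendsto_finset_sum
      intro j _
      exact hterm i j
    have hQ : 0 ≤ ∑ i, ∑ j, v i * v j * M' i j := by
      apply ge_of_tendsto hsum
      filter_upwards [self_mem_nhdsWithin] with ε hε
      have hε' : (0:ℝ) < ε := hε
      have hHP := halfplane_form_nonneg f hf (fun k => ((x k : ℝ):ℂ) + ↑ε * I)
        (fun k => by simp [Complex.add_im, Complex.mul_im, hε']) (fun k => ((v k : ℝ):ℂ))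
      rw [Complex.re_sum] at hHP
      calc (0:ℝ) ≤ _ := hHP
        _ = _ := by
          apply Finset.sum_congr rfl
          intro i _
          rw [Complex.re_sum]
    -- identify with the dot product
    have hdp : dotProduct (star v) (M'.mulVec v) = ∑ i, ∑ j, v i * v j * M' i j := by
      simp only [dotProduct, Matrix.mulVec, Pi.star_apply, star_trivial, Finset.mul_sum]
      apply Finset.sum_congr rfl
      intro i _
      apply Finset.sum_congr rfl
      intro j _
      ring
    simp only [Finsupp.sum_fintype, star_trivial, zero_mul, mul_zero, Finset.sum_const_zero, implies_true]
    exact le_of_le_of_eq hQ (Finset.sum_congr rfl fun i _ => Finset.sum_congr rfl fun j _ => by ring)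
end
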